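/- arXiv:2205.01993 — 4 statements merged into one kernel-verified Lean document; each statement's English description precedes it below -/
import Mathlib

section
/- Suppose Ω ⊂ ℍ is an h-convex domain and E is an h-convex open subset of Ω. Then the function ψ_E(p) = −d̃_H(p, ℍ∖E), p ∈ Ω, is continuous and h-quasiconvex in Ω. -/
noncomputable section

/-- The underlying space of the first Heisenberg group: `ℝ³`. -/
abbrev Heis := ℝ × ℝ × ℝ

/-- Heisenberg group multiplication. -/
def hmul (p q : Heis) : Heis :=
  (p.1 + q.1, p.2.1 + q.2.1, p.2.2 + q.2.2 + (p.1 * q.2.1 - q.1 * p.2.1) / 2)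

/-- Heisenberg group inverse. -/
def hinv (p : Heis) : Heis := (-p.1, -p.2.1, -p.2.2)

/-- The horizontal plane `ℍ_p = p · ℍ₀` through `p`. -/
def hplane (p : Heis) : Set Heis := {q | ∃ h : Heis, h.2.2 = 0 ∧ q = hmul p h}

/-- The (Euclidean) segment `[p,q]`. -/
def hseg (p q : Heis) : Set Heis :=
  {w | ∃ l : ℝ, 0 ≤ l ∧ l ≤ 1 ∧ w = (1 - l) • p + l • q}

/-- The half-open segment `(p,q]`. -/
def hsegHalfOpen (p q : Heis) : Set Heis :=
  {w | ∃ l : ℝ, 0 < l ∧ l ≤ 1 ∧ w = (1 - l) • p + l • q}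

/-- A set `E ⊆ ℍ` is h-convex if for every `p ∈ E` and `q ∈ ℍ_p ∩ E`,
the horizontal segment `[p,q]` lies in `E`. -/
def IsHConvex (E : Set Heis) : Prop :=
  ∀ p ∈ E, ∀ q ∈ hplane p, q ∈ E → ∀ w ∈ hseg p q, w ∈ E

/-- A set `E` is h-convex up to boundary if for every `p ∈ ∂E` and `q ∈ ℍ_p ∩ E`,
the half-open segment `(p,q]` lies in `E`. -/
def IsHConvexUpToBoundary (E : Set Heis) : Prop :=
  ∀ p ∈ frontier E, ∀ q ∈ hplane p, q ∈ E → ∀ w ∈ hsegHalfOpen p q, w ∈ E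

/-- A function `u` is h-quasiconvex on `Ω` if `u(w) ≤ max (u p) (u q)` for all
`p ∈ Ω`, `q ∈ ℍ_p ∩ Ω` and `w ∈ [p,q]`. -/
def IsHQuasiconvexOn (Ω : Set Heis) (u : Heis → ℝ) : Prop :=
  ∀ p ∈ Ω, ∀ q ∈ hplane p, q ∈ Ω → ∀ w ∈ hseg p q, u w ≤ max (u p) (u q)

/-- `Qf` is the h-quasiconvex envelope of `f` on `Ω`: the greatest h-quasiconvex
function majorized by `f` on `Ω` (equivalently, the pointwise supremum of all
h-quasiconvex minorants of `f`). -/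
def IsHQCEnvelopeOn (Ω : Set Heis) (f Qf : Heis → ℝ) : Prop :=
  IsHQuasiconvexOn Ω Qf ∧ (∀ p ∈ Ω, Qf p ≤ f p) ∧
    ∀ g : Heis → ℝ, IsHQuasiconvexOn Ω g → (∀ p ∈ Ω, g p ≤ f p) → ∀ p ∈ Ω, g p ≤ Qf p

/-- The Korányi gauge. -/
def kGauge (p : Heis) : ℝ := ((p.1 ^ 2 + p.2.1 ^ 2) ^ 2 + 16 * p.2.2 ^ 2) ^ ((1 : ℝ) / 4)

/-- The left-invariant gauge metric `d_H(p,q) = |p⁻¹ · q|_G`. -/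
def dLeft (p q : Heis) : ℝ := kGauge (hmul (hinv p) q)

/-- The right-invariant gauge metric `d̃_H(p,q) = |p · q⁻¹|_G`. -/
def dRight (p q : Heis) : ℝ := kGauge (hmul p (hinv q))

/-- The gauge ball `B_r(p) = {q : |p⁻¹ · q|_G < r}`. -/
def gball (p : Heis) (r : ℝ) : Set Heis := {q | dLeft p q < r}

/-- The horizontal gradient `∇_H φ(p) = (X₁ φ(p), X₂ φ(p))`, where
`X₁ = ∂_x − (y/2) ∂_z` and `X₂ = ∂_y + (x/2) ∂_z`. -/
def hGrad (φ : Heis → ℝ) (p : Heis) : ℝ × ℝ :=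
  (fderiv ℝ φ p ((1, 0, -p.2.1 / 2) : Heis), fderiv ℝ φ p ((0, 1, p.1 / 2) : Heis))

/-- The pairing `⟨∇_H φ(p), (p⁻¹ · ξ)_h⟩`. -/
def hpair (φ : Heis → ℝ) (p ξ : Heis) : ℝ :=
  (hGrad φ p).1 * (hmul (hinv p) ξ).1 + (hGrad φ p).2 * (hmul (hinv p) ξ).2.1

/-- Local boundedness of `u` on `A`. -/
def LocBddOn (A : Set Heis) (u : Heis → ℝ) : Prop :=
  ∀ p ∈ A, ∃ s ∈ nhds p, ∃ C : ℝ, ∀ q ∈ s ∩ A, |u q| ≤ C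

/-- `u` is a viscosity subsolution of `u + H(p, u, ∇_H u) = f` in `Ω`, where
`H(p, u, ∇_H u) = sup {⟨∇_H u(p), (p⁻¹·ξ)_h⟩ : ξ ∈ ℍ_p ∩ Ω, u(ξ) < u(p)}`
(with the supremum understood to be `0` when `∇_H φ(p) = 0`). -/
def IsSubSoln (Ω : Set Heis) (f u : Heis → ℝ) : Prop :=
  UpperSemicontinuousOn u Ω ∧ LocBddOn Ω u ∧
    ∀ p ∈ Ω, ∀ φ : Heis → ℝ, ContDiff ℝ 1 φ →
      IsMaxOn (fun q => u q - φ q) Ω p →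
        (∀ ξ ∈ hplane p, ξ ∈ Ω → u ξ < u p → u p + hpair φ p ξ ≤ f p) ∧
        (hGrad φ p = 0 → u p ≤ f p)

/-- `u` is a viscosity supersolution of `u + H(p, u, ∇_H u) = f` in `Ω`, where for
supersolutions `H(p, u, ∇_H u) = sup {⟨∇_H u(p), (p⁻¹·ξ)_h⟩ : ξ ∈ ℍ_p ∩ Ω, u(ξ) ≤ u(p)}`.
(The set `Ŝ_p(u)` always contains `p` itself, so the inequality
`u(p) + sup ≥ f(p)` is expressed in ε-form.) -/
def IsSuperSoln (Ω : Set Heis) (f u : Heis → ℝ) : Prop :=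
  LowerSemicontinuousOn u Ω ∧ LocBddOn Ω u ∧
    ∀ p ∈ Ω, ∀ φ : Heis → ℝ, ContDiff ℝ 1 φ →
      IsMinOn (fun q => u q - φ q) Ω p →
        ∀ ε > 0, ∃ ξ ∈ hplane p, ξ ∈ Ω ∧ u ξ ≤ u p ∧ f p - ε ≤ u p + hpair φ p ξ

/-- `w` is the upper semicontinuous envelope of `v` on `A`: the smallest
upper semicontinuous function on `A` that majorizes `v`. -/
def IsUscEnvOn (A : Set Heis) (v w : Heis → ℝ) : Prop :=
  UpperSemicontinuousOn w A ∧ (∀ q ∈ A, v q ≤ w q) ∧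
    ∀ z : Heis → ℝ, UpperSemicontinuousOn z A → (∀ q ∈ A, v q ≤ z q) → ∀ q ∈ A, w q ≤ z q

/-- `w` is the lower semicontinuous envelope of `v` on `A`: the largest
lower semicontinuous function on `A` minorized by `v`. -/
def IsLscEnvOn (A : Set Heis) (v w : Heis → ℝ) : Prop :=
  LowerSemicontinuousOn w A ∧ (∀ q ∈ A, w q ≤ v q) ∧
    ∀ z : Heis → ℝ, LowerSemicontinuousOn z A → (∀ q ∈ A, z q ≤ v q) → ∀ q ∈ A, z q ≤ w q

/-- The h-convex hull of `E`: the intersection of all h-convex sets containing `E`. -/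
def hconvexHull (E : Set Heis) : Set Heis := ⋂₀ {D : Set Heis | IsHConvex D ∧ E ⊆ D}

/-- The direct convexification operator
`T[f](w) = inf {max (f p) (f q) : w ∈ [p,q], p ∈ Ω, q ∈ Ω ∩ ℍ_p}`. -/
def Tconv (Ω : Set Heis) (f : Heis → ℝ) : Heis → ℝ := fun w =>
  sInf {y | ∃ p ∈ Ω, ∃ q ∈ hplane p, q ∈ Ω ∧ w ∈ hseg p q ∧ y = max (f p) (f q)}


/-! ### Auxiliary lemmas -/

section Aux

open Real Filter Topology

lemma hmul_assoc' (a b c : Heis) : hmul (hmul a b) c = hmul a (hmul b c) := by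
  simp only [hmul, Prod.mk.injEq]
  refine ⟨by ring, by ring, by ring⟩

lemma hinv_hmul_self' (a : Heis) : hmul (hinv a) a = ((0, 0, 0) : Heis) := by
  simp only [hmul, hinv, Prod.mk.injEq]
  refine ⟨by ring, by ring, by ring⟩

lemma hmul_hinv_self' (a : Heis) : hmul a (hinv a) = ((0, 0, 0) : Heis) := by
  simp only [hmul, hinv, Prod.mk.injEq]
  refine ⟨by ring, by ring, by ring⟩

lemma zero_hmul' (a : Heis) : hmul ((0, 0, 0) : Heis) a = a := by
  obtain ⟨a1, a2, a3⟩ := a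
  simp only [hmul, Prod.mk.injEq]
  refine ⟨by ring, by ring, by ring⟩

lemma hmul_zero' (a : Heis) : hmul a ((0, 0, 0) : Heis) = a := by
  obtain ⟨a1, a2, a3⟩ := a
  simp only [hmul, Prod.mk.injEq]
  refine ⟨by ring, by ring, by ring⟩

lemma hinv_hmul' (a b : Heis) : hinv (hmul a b) = hmul (hinv b) (hinv a) := by
  simp only [hmul, hinv, Prod.mk.injEq]
  refine ⟨by ring, by ring, by ring⟩

lemma hmul_affine (h p q : Heis) (l : ℝ) :
    hmul h ((1 - l) • p + l • q) = (1 - l) • hmul h p + l • hmul h q := by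
  obtain ⟨h1, h2, h3⟩ := h
  obtain ⟨p1, p2, p3⟩ := p
  obtain ⟨q1, q2, q3⟩ := q
  simp only [hmul, Prod.smul_mk, Prod.mk_add_mk, smul_eq_mul, Prod.mk.injEq]
  refine ⟨by ring, by ring, by ring⟩

/-- Auxiliary complex number `|z|² + 4it` associated to a point. -/
def cg (a : Heis) : ℂ := ((a.1 ^ 2 + a.2.1 ^ 2 : ℝ) : ℂ) + ((4 * a.2.2 : ℝ) : ℂ) * Complex.I

/-- The horizontal part of a point, as a complex number. -/
def zc (a : Heis) : ℂ := ((a.1 : ℝ) : ℂ) + ((a.2.1 : ℝ) : ℂ) * Complex.I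

lemma cg_re (a : Heis) : (cg a).re = a.1 ^ 2 + a.2.1 ^ 2 := by
  simp [cg, pow_two, Complex.mul_re]
lemma cg_im (a : Heis) : (cg a).im = 4 * a.2.2 := by
  simp [cg, pow_two, Complex.mul_im]
lemma zc_re (a : Heis) : (zc a).re = a.1 := by simp [zc]
lemma zc_im (a : Heis) : (zc a).im = a.2.1 := by simp [zc]

lemma abs_cg (a : Heis) :
    ‖cg a‖ = Real.sqrt ((a.1 ^ 2 + a.2.1 ^ 2) ^ 2 + 16 * a.2.2 ^ 2) := by
  rw [Complex.norm_def, Complex.normSq_apply, cg_re, cg_im]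
  congr 1
  ring

lemma kGauge_eq_sqrt (a : Heis) : kGauge a = Real.sqrt (‖cg a‖) := by
  rw [abs_cg, kGauge]
  rw [show (1 : ℝ) / 4 = (1 / 2 : ℝ) * (1 / 2 : ℝ) by norm_num,
    Real.rpow_mul (by positivity)]
  rw [← Real.sqrt_eq_rpow, ← Real.sqrt_eq_rpow]

lemma abs_zc_le (a : Heis) : ‖zc a‖ ≤ Real.sqrt (‖cg a‖) := by
  have h1 : ‖zc a‖ = Real.sqrt (a.1 ^ 2 + a.2.1 ^ 2) := by
    rw [Complex.norm_def, Complex.normSq_apply, zc_re, zc_im]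
    congr 1
    ring
  rw [h1]
  apply Real.sqrt_le_sqrt
  calc a.1 ^ 2 + a.2.1 ^ 2 = (cg a).re := (cg_re a).symm
    _ ≤ ‖cg a‖ := Complex.re_le_norm _

lemma cg_hmul (a b : Heis) :
    cg (hmul a b) = cg a + cg b + 2 * (starRingEnd ℂ) (zc a) * zc b := by
  apply Complex.ext
  · simp only [Complex.add_re, Complex.mul_re, Complex.mul_im, Complex.conj_re, Complex.conj_im,
      cg_re, cg_im, zc_re, zc_im, hmul, Complex.re_ofNat, Complex.im_ofNat]
    ring
  · simp only [Complex.add_im, Complex.mul_re, Complex.mul_im, Complex.conj_re, Complex.conj_im,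
      cg_re, cg_im, zc_re, zc_im, hmul, Complex.re_ofNat, Complex.im_ofNat]
    ring

lemma kGauge_nonneg (a : Heis) : 0 ≤ kGauge a := Real.rpow_nonneg (by positivity) _

lemma kGauge_triangle (a b : Heis) : kGauge (hmul a b) ≤ kGauge a + kGauge b := by
  rw [kGauge_eq_sqrt, kGauge_eq_sqrt, kGauge_eq_sqrt]
  set s := Real.sqrt (‖cg a‖) with hs'
  set t := Real.sqrt (‖cg b‖) with ht'
  have hs : 0 ≤ s := Real.sqrt_nonneg _
  have ht : 0 ≤ t := Real.sqrt_nonneg _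
  have hsa : ‖cg a‖ = s ^ 2 := (Real.sq_sqrt (norm_nonneg _)).symm
  have htb : ‖cg b‖ = t ^ 2 := (Real.sq_sqrt (norm_nonneg _)).symm
  have h1 : ‖cg (hmul a b)‖ ≤ (s + t) ^ 2 := by
    rw [cg_hmul]
    have e1 : ‖cg a + cg b + 2 * (starRingEnd ℂ) (zc a) * zc b‖
        ≤ ‖cg a + cg b‖ + ‖2 * (starRingEnd ℂ) (zc a) * zc b‖ :=
      norm_add_le _ _
    have e2 : ‖cg a + cg b‖ ≤ ‖cg a‖ + ‖cg b‖ :=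
      norm_add_le _ _
    have e3 : ‖2 * (starRingEnd ℂ) (zc a) * zc b‖
        = 2 * ‖zc a‖ * ‖zc b‖ := by
      rw [norm_mul, norm_mul, Complex.norm_conj, Complex.norm_two]
    have e4 := abs_zc_le a
    have e5 := abs_zc_le b
    have e6 : ‖zc a‖ * ‖zc b‖ ≤ s * t :=
      mul_le_mul e4 e5 (norm_nonneg _) hs
    rw [e3] at e1
    nlinarith [e1, e2]
  calc Real.sqrt (‖cg (hmul a b)‖) ≤ Real.sqrt ((s + t) ^ 2) :=
        Real.sqrt_le_sqrt h1
    _ = s + t := Real.sqrt_sq (by positivity)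

lemma kGauge_hinv (a : Heis) : kGauge (hinv a) = kGauge a := by
  obtain ⟨a1, a2, a3⟩ := a
  simp only [kGauge, hinv]
  norm_num

lemma kGauge_zero : kGauge ((0, 0, 0) : Heis) = 0 := by
  simp only [kGauge]
  norm_num

lemma dRight_symm (p q : Heis) : dRight p q = dRight q p := by
  unfold dRight
  rw [show hmul q (hinv p) = hinv (hmul p (hinv q)) by
    rw [hinv_hmul']
    congr 1
    simp [hinv]]
  rw [kGauge_hinv]

lemma dRight_triangle (p q r : Heis) : dRight p r ≤ dRight p q + dRight q r := by
  unfold dRight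
  have : hmul p (hinv r) = hmul (hmul p (hinv q)) (hmul q (hinv r)) := by
    rw [hmul_assoc', ← hmul_assoc' (hinv q), hinv_hmul_self', zero_hmul']
  rw [this]
  exact kGauge_triangle _ _

lemma dRight_self (p : Heis) : dRight p p = 0 := by
  unfold dRight
  rw [hmul_hinv_self', kGauge_zero]

lemma kGauge_continuous : Continuous kGauge := by
  have : kGauge = fun a => Real.sqrt (‖cg a‖) := funext kGauge_eq_sqrt
  rw [this]
  apply Real.continuous_sqrt.comp
  apply continuous_norm.comp
  unfold cg
  fun_prop

lemma dRight_continuous (p0 : Heis) : Continuous fun p => dRight p p0 := by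
  unfold dRight
  apply kGauge_continuous.comp
  unfold hmul hinv
  fun_prop

end Aux

/-- Proposition 2.5 (A metric-based h-quasiconvex function): if `E` is an
h-convex open subset of an h-convex domain `Ω`, then
`ψ_E(p) = −d̃_H(p, ℍ∖E)` is continuous and h-quasiconvex in `Ω`. -/
theorem metric_based_hquasiconvex
    (Ω : Set Heis) (hΩo : IsOpen Ω) (hΩconn : IsConnected Ω) (hΩhc : IsHConvex Ω)
    (E : Set Heis) (hEo : IsOpen E) (hEhc : IsHConvex E) (hEΩ : E ⊆ Ω) :
    ContinuousOn (fun p => -sInf {r : ℝ | ∃ q, q ∉ E ∧ r = dRight p q}) Ω ∧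
    IsHQuasiconvexOn Ω (fun p => -sInf {r : ℝ | ∃ q, q ∉ E ∧ r = dRight p q}) := by
  by_cases hE : ∃ q0 : Heis, q0 ∉ E
  · obtain ⟨q0, hq0⟩ := hE
    set S : Heis → Set ℝ := fun p => {r : ℝ | ∃ q, q ∉ E ∧ r = dRight p q} with hS
    have hne : ∀ p, (S p).Nonempty := fun p => ⟨dRight p q0, q0, hq0, rfl⟩
    have hbdd : ∀ p, BddBelow (S p) := by
      intro p
      refine ⟨0, ?_⟩
      rintro y ⟨q, _, rfl⟩
      exact kGauge_nonneg _
    have hLip : ∀ p p' : Heis, sInf (S p) - sInf (S p') ≤ dRight p p' := by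
      intro p p'
      have key : ∀ y ∈ S p', sInf (S p) - dRight p p' ≤ y := by
        rintro y ⟨ζ, hζ, rfl⟩
        have h1 : sInf (S p) ≤ dRight p ζ := csInf_le (hbdd p) ⟨ζ, hζ, rfl⟩
        have h2 : dRight p ζ ≤ dRight p p' + dRight p' ζ := dRight_triangle p p' ζ
        linarith
      have := le_csInf (hne p') key
      linarith
    have habs : ∀ p p' : Heis, |sInf (S p) - sInf (S p')| ≤ dRight p p' := by
      intro p p'
      rw [abs_sub_le_iff]
      exact ⟨hLip p p', by rw [dRight_symm]; exact hLip p' p⟩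
    have hcont : Continuous fun p => sInf (S p) := by
      rw [continuous_iff_continuousAt]
      intro p0
      have hg : Filter.Tendsto (fun p => dRight p p0) (nhds p0) (nhds 0) := by
        have hc := (dRight_continuous p0).tendsto p0
        rwa [dRight_self] at hc
      have h1 : Filter.Tendsto (fun p => sInf (S p) - sInf (S p0)) (nhds p0) (nhds 0) :=
        squeeze_zero_norm (fun p => by rw [Real.norm_eq_abs]; exact habs p p0) hg
      have h2 := h1.add (tendsto_const_nhds (x := sInf (S p0)) (f := nhds p0))
      simpa [ContinuousAt] using h2
    constructor
    · exact (hcont.neg).continuousOn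
    · intro p hp q hq hqΩ w hw
      obtain ⟨δ, hδ0, hqeq⟩ := hq
      obtain ⟨l, hl0, hl1, hweq⟩ := hw
      rw [max_neg_neg, neg_le_neg_iff]
      refine le_csInf (hne w) ?_
      rintro y ⟨ζ, hζ, rfl⟩
      by_contra hcon
      push_neg at hcon
      have hltp : dRight w ζ < sInf (S p) := lt_of_lt_of_le hcon (min_le_left _ _)
      have hltq : dRight w ζ < sInf (S q) := lt_of_lt_of_le hcon (min_le_right _ _)
      set h : Heis := hmul ζ (hinv w) with hh
      have hkh : kGauge h = dRight w ζ := by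
        rw [hh]
        show dRight ζ w = dRight w ζ
        exact dRight_symm ζ w
      have hdist : ∀ x : Heis, dRight x (hmul h x) = kGauge h := by
        intro x
        show kGauge (hmul x (hinv (hmul h x))) = kGauge h
        rw [hinv_hmul', ← hmul_assoc', hmul_hinv_self', zero_hmul', kGauge_hinv]
      have hmem : ∀ x : Heis, dRight w ζ < sInf (S x) → hmul h x ∈ E := by
        intro x hx
        by_contra hxE
        have hle : sInf (S x) ≤ dRight x (hmul h x) := csInf_le (hbdd x) ⟨hmul h x, hxE, rfl⟩
        rw [hdist, hkh] at hle
        exact absurd hx (not_lt.mpr hle)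
      have hpE := hmem p hltp
      have hqE := hmem q hltq
      have hplaneq : hmul h q ∈ hplane (hmul h p) :=
        ⟨δ, hδ0, by rw [hqeq, ← hmul_assoc']⟩
      have hsegw : hmul h w ∈ hseg (hmul h p) (hmul h q) :=
        ⟨l, hl0, hl1, by rw [hweq, hmul_affine]⟩
      have hwE : hmul h w ∈ E := hEhc _ hpE _ hplaneq hqE _ hsegw
      have hζw : hmul h w = ζ := by
        rw [hh, hmul_assoc', hinv_hmul_self', hmul_zero']
      rw [hζw] at hwE
      exact hζ hwE
  · push_neg at hE
    have hfun : (fun p : Heis => -sInf {r : ℝ | ∃ q, q ∉ E ∧ r = dRight p q})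
        = fun _ => (0 : ℝ) := by
      funext p
      have hempty : {r : ℝ | ∃ q, q ∉ E ∧ r = dRight p q} = (∅ : Set ℝ) := by
        ext r
        simp only [Set.mem_setOf_eq, Set.mem_empty_iff_false, iff_false, not_exists]
        rintro q ⟨hq, _⟩
        exact hq (hE q)
      rw [hempty, Real.sInf_empty, neg_zero]
    rw [hfun]
    refine ⟨continuousOn_const, ?_⟩
    intro p _ q _ _ w _
    simp
end
end

section
/- Let Ω be an h-convex domain in ℍ and f : Ω → ℝ be bounded from below. Define the convexification operator T[f](w) = inf{max{f(p), f(q)} : w ∈ [p,q], p ∈ Ω, q ∈ Ω ∩ ℍ_p} for w ∈ Ω. Then the iterates Tⁿ[f] converge pointwise in Ω to the h-quasiconvex envelope Q(f) as n → ∞. -/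
noncomputable section

/-- Theorem 2.11 (Iterative scheme with direct convexification): if `f` is
bounded from below on an h-convex domain `Ω`, then the iterates `Tⁿ[f]`
converge pointwise in `Ω` to the h-quasiconvex envelope `Q(f)`. -/
theorem direct_convexification_iterates
    (Ω : Set Heis) (hΩo : IsOpen Ω) (hΩconn : IsConnected Ω) (hΩhc : IsHConvex Ω)
    (f : Heis → ℝ) (hbdd : ∃ c : ℝ, ∀ p ∈ Ω, c ≤ f p)
    (Qf : Heis → ℝ) (hQf : IsHQCEnvelopeOn Ω f Qf) :
    ∀ w ∈ Ω, Filter.Tendsto (fun n : ℕ => (Tconv Ω)^[n] f w) Filter.atTop (nhds (Qf w)) := by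
  obtain ⟨c, hc⟩ := hbdd
  set S : (Heis → ℝ) → Heis → Set ℝ := fun u w =>
    {y | ∃ p ∈ Ω, ∃ q ∈ hplane p, q ∈ Ω ∧ w ∈ hseg p q ∧ y = max (u p) (u q)} with hS
  have hTconv : ∀ u w, Tconv Ω u w = sInf (S u w) := fun u w => rfl
  -- p ∈ hplane p and p ∈ hseg p p
  have hself_plane : ∀ p : Heis, p ∈ hplane p := by
    intro p
    refine ⟨(0, 0, 0), rfl, ?_⟩
    simp [hmul]
  have hself_seg : ∀ p : Heis, p ∈ hseg p p := by
    intro p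
    exact ⟨0, le_refl _, zero_le_one, by simp⟩
  have hself_mem : ∀ (u : Heis → ℝ), ∀ w ∈ Ω, max (u w) (u w) ∈ S u w := by
    intro u w hw
    exact ⟨w, hw, w, hself_plane w, hw, hself_seg w, rfl⟩
  have hbddS : ∀ (u : Heis → ℝ), (∀ p ∈ Ω, c ≤ u p) → ∀ w, BddBelow (S u w) := by
    intro u hu w
    refine ⟨c, ?_⟩
    rintro y ⟨p, hp, q, hq, hqΩ, hw, rfl⟩
    exact le_trans (hu p hp) (le_max_left _ _)
  -- key inequality : Tconv u w ≤ max (u p) (u q)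
  have hle_max : ∀ (u : Heis → ℝ), (∀ p ∈ Ω, c ≤ u p) →
      ∀ p ∈ Ω, ∀ q ∈ hplane p, q ∈ Ω → ∀ w ∈ hseg p q,
        Tconv Ω u w ≤ max (u p) (u q) := by
    intro u hu p hp q hq hqΩ w hw
    exact csInf_le (hbddS u hu w) ⟨p, hp, q, hq, hqΩ, hw, rfl⟩
  have hle_self : ∀ (u : Heis → ℝ), (∀ p ∈ Ω, c ≤ u p) → ∀ w ∈ Ω,
      Tconv Ω u w ≤ u w := by
    intro u hu w hw
    have := hle_max u hu w hw w (hself_plane w) hw w (hself_seg w)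
    simpa using this
  have hlbT : ∀ (u : Heis → ℝ), (∀ p ∈ Ω, c ≤ u p) → ∀ w ∈ Ω, c ≤ Tconv Ω u w := by
    intro u hu w hw
    refine le_csInf ⟨_, hself_mem u w hw⟩ ?_
    rintro y ⟨p, hp, q, hq, hqΩ, hww, rfl⟩
    exact le_trans (hu p hp) (le_max_left _ _)
  set F : ℕ → Heis → ℝ := fun n => (Tconv Ω)^[n] f with hF
  have hFsucc : ∀ n w, F (n + 1) w = Tconv Ω (F n) w := by
    intro n w
    simp [hF, Function.iterate_succ_apply']
  -- lower bound c for all iterates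
  have hFc : ∀ n, ∀ p ∈ Ω, c ≤ F n p := by
    intro n
    induction n with
    | zero => exact hc
    | succ n ih =>
      intro p hp
      rw [hFsucc]
      exact hlbT (F n) ih p hp
  -- Qf is a lower bound for all iterates
  have hQle : ∀ n, ∀ p ∈ Ω, Qf p ≤ F n p := by
    intro n
    induction n with
    | zero => exact hQf.2.1
    | succ n ih =>
      intro w hw
      rw [hFsucc]
      refine le_csInf ⟨_, hself_mem (F n) w hw⟩ ?_
      rintro y ⟨p, hp, q, hq, hqΩ, hww, rfl⟩
      have h1 : Qf w ≤ max (Qf p) (Qf q) := hQf.1 p hp q hq hqΩ w hww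
      exact h1.trans (max_le_max (ih p hp) (ih q hqΩ))
  -- iterates are antitone on Ω
  have hanti : ∀ w ∈ Ω, Antitone fun n => F n w := by
    intro w hw
    refine antitone_nat_of_succ_le ?_
    intro n
    rw [hFsucc]
    exact hle_self (F n) (hFc n) w hw
  have hbddR : ∀ w ∈ Ω, BddBelow (Set.range fun n => F n w) := by
    intro w hw
    refine ⟨c, ?_⟩
    rintro y ⟨n, rfl⟩
    exact hFc n w hw
  set g : Heis → ℝ := fun w => ⨅ n, F n w with hg
  have htend : ∀ w ∈ Ω, Filter.Tendsto (fun n => F n w) Filter.atTop (nhds (g w)) := by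
    intro w hw
    exact tendsto_atTop_ciInf (hanti w hw) (hbddR w hw)
  -- g ≤ f on Ω
  have hgf : ∀ w ∈ Ω, g w ≤ f w := by
    intro w hw
    have := ciInf_le (hbddR w hw) 0
    simpa [hg, hF] using this
  -- Qf ≤ g on Ω
  have hQg : ∀ w ∈ Ω, Qf w ≤ g w := by
    intro w hw
    exact le_ciInf fun n => hQle n w hw
  -- g is h-quasiconvex on Ω
  have hgqc : IsHQuasiconvexOn Ω g := by
    intro p hp q hq hqΩ w hw
    have hwΩ : w ∈ Ω := hΩhc p hp q hq hqΩ w hw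
    refine ge_of_tendsto ((htend p hp).max (htend q hqΩ)) ?_
    filter_upwards with n
    calc g w ≤ F (n + 1) w := ciInf_le (hbddR w hwΩ) (n + 1)
      _ ≤ max (F n p) (F n q) := by
          rw [hFsucc]
          exact hle_max (F n) (hFc n) p hp q hq hqΩ w hw
  have hgQ : ∀ w ∈ Ω, g w ≤ Qf w := hQf.2.2 g hgqc hgf
  intro w hw
  have : g w = Qf w := le_antisymm (hgQ w hw) (hQg w hw)
  rw [← this]
  exact htend w hw
end
end

section
/- Let Ω be a bounded domain in ℍ and f ∈ C(Ω). Let u ∈ USC(Ω̄) be a viscosity subsolution and v ∈ LSC(Ω̄) be a viscosity supersolution of u + H(p,u,∇_H u) = f in Ω. Assume in addition that u ≤ v = K on ∂Ω and u ≤ K in Ω̄ for some K ∈ ℝ. Then u ≤ v in Ω̄. -/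
noncomputable section

/- ====== auxiliary machinery ====== -/

namespace CPaux

/-- The fourth power of the Korányi gauge (a polynomial). -/
def Ffun (z : Heis) : ℝ := (z.1^2 + z.2.1^2)^2 + 16*z.2.2^2

lemma hmul_assoc (a b c : Heis) : hmul (hmul a b) c = hmul a (hmul b c) := by
  simp only [hmul]; ext <;> simp <;> ring

lemma hinv_hmul_cancel (q h : Heis) : hmul (hinv q) (hmul q h) = h := by
  simp only [hmul, hinv]; ext <;> simp <;> ring

lemma hmul_hinv_cancel (m q : Heis) : hmul (hmul m q) (hinv q) = m := by
  simp only [hmul, hinv]; ext <;> simp <;> ring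

lemma hmul_hinv_self (p : Heis) : hmul p (hinv p) = (0 : Heis) := by
  simp only [hmul, hinv]; ext <;> simp <;> ring

lemma hmul_hinv_mul (p q : Heis) : hmul (hmul p (hinv q)) q = p := by
  simp only [hmul, hinv]; ext <;> simp <;> ring

lemma hmul_zero_left (q : Heis) : hmul (0 : Heis) q = q := by
  simp only [hmul]; ext <;> simp

lemma Ffun_nonneg (z : Heis) : 0 ≤ Ffun z := by unfold Ffun; positivity

lemma Ffun_zero : Ffun (0 : Heis) = 0 := by simp [Ffun]

lemma cont_Ffun : Continuous Ffun := by unfold Ffun; fun_prop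

lemma cont_hinv : Continuous hinv := by unfold hinv; fun_prop

lemma cont_hmul : Continuous (fun w : Heis × Heis => hmul w.1 w.2) := by
  have : (fun w : Heis × Heis => hmul w.1 w.2) = fun w : Heis × Heis =>
      ((w.1.1 + w.2.1, w.1.2.1 + w.2.2.1,
        w.1.2.2 + w.2.2.2 + (w.1.1 * w.2.2.1 - w.2.1 * w.1.2.1) * (1/2)) : Heis) := by
    funext w; simp only [hmul]; norm_num; ring
  rw [this]; fun_prop

lemma cont_gauge : Continuous (fun w : Heis × Heis => Ffun (hmul w.1 (hinv w.2))) := by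
  apply cont_Ffun.comp
  exact cont_hmul.comp (continuous_fst.prodMk (cont_hinv.comp continuous_snd))

lemma Ffun_bounds {z : Heis} {δ : ℝ} (h : Ffun z ≤ δ) :
    |z.1| ≤ Real.sqrt (Real.sqrt δ) ∧ |z.2.1| ≤ Real.sqrt (Real.sqrt δ) ∧
      |z.2.2| ≤ Real.sqrt δ := by
  have h0 : (0:ℝ) ≤ δ := le_trans (Ffun_nonneg z) h
  have key : ∀ a : ℝ, (a^2)^2 ≤ δ → |a| ≤ Real.sqrt (Real.sqrt δ) := by
    intro a ha
    have h1 : a^2 ≤ Real.sqrt δ := by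
      have := Real.sqrt_le_sqrt ha
      rwa [Real.sqrt_sq (sq_nonneg a)] at this
    have h2 := Real.sqrt_le_sqrt h1
    rwa [Real.sqrt_sq_eq_abs] at h2
  unfold Ffun at h
  have k1 : (z.1^2)^2 ≤ δ := by
    nlinarith [sq_nonneg z.1, sq_nonneg z.2.1, sq_nonneg z.2.2, sq_nonneg (z.1^2 + z.2.1^2)]
  have k2 : (z.2.1^2)^2 ≤ δ := by
    nlinarith [sq_nonneg z.1, sq_nonneg z.2.1, sq_nonneg z.2.2, sq_nonneg (z.1^2 + z.2.1^2)]
  refine ⟨key z.1 k1, key z.2.1 k2, ?_⟩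
  have h1 : z.2.2^2 ≤ δ := by nlinarith [sq_nonneg (z.1^2 + z.2.1^2), sq_nonneg z.2.2]
  have := Real.sqrt_le_sqrt h1
  rwa [Real.sqrt_sq_eq_abs] at this

lemma mem_ball_coords {x : Heis} {r : ℝ} (h1 : |x.1| ≤ r) (h2 : |x.2.1| ≤ r)
    (h3 : |x.2.2| ≤ r) : x ∈ Metric.closedBall (0:Heis) r := by
  rw [Metric.mem_closedBall, dist_zero_right, Prod.norm_def, Prod.norm_def]
  exact max_le (by simpa [Real.norm_eq_abs] using h1)
    (max_le (by simpa [Real.norm_eq_abs] using h2) (by simpa [Real.norm_eq_abs] using h3))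

lemma coords_of_mem_ball {x : Heis} {r : ℝ} (h : x ∈ Metric.closedBall (0:Heis) r) :
    |x.1| ≤ r ∧ |x.2.1| ≤ r ∧ |x.2.2| ≤ r := by
  rw [Metric.mem_closedBall, dist_zero_right] at h
  refine ⟨le_trans (norm_fst_le x) h, le_trans (le_trans (norm_fst_le x.2) (norm_snd_le x)) h,
    le_trans (le_trans (norm_snd_le x.2) (norm_snd_le x)) h⟩

lemma hmul_mem_bigball {mm η : Heis} {R : ℝ} (hR : 1 ≤ R)
    (hm1 : |mm.1| ≤ 1) (hm2 : |mm.2.1| ≤ 1) (hm3 : |mm.2.2| ≤ 1)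
    (hη : η ∈ Metric.closedBall (0:Heis) R) :
    hmul mm η ∈ Metric.closedBall (0:Heis) (3*R) := by
  obtain ⟨he1, he2, he3⟩ := coords_of_mem_ball hη
  have hb1 : |mm.1 + η.1| ≤ 3*R := by
    calc |mm.1 + η.1| ≤ |mm.1| + |η.1| := abs_add_le _ _
    _ ≤ 3*R := by linarith
  have hb2 : |mm.2.1 + η.2.1| ≤ 3*R := by
    calc |mm.2.1 + η.2.1| ≤ |mm.2.1| + |η.2.1| := abs_add_le _ _
    _ ≤ 3*R := by linarith
  have hb3 : |mm.2.2 + η.2.2 + (mm.1 * η.2.1 - η.1 * mm.2.1) / 2| ≤ 3*R := by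
    have e1 : |mm.1 * η.2.1| ≤ 1*R := by
      rw [abs_mul]; exact mul_le_mul hm1 he2 (abs_nonneg _) zero_le_one
    have e2 : |η.1 * mm.2.1| ≤ R*1 := by
      rw [abs_mul]; exact mul_le_mul he1 hm2 (abs_nonneg _) (by linarith)
    calc |mm.2.2 + η.2.2 + (mm.1 * η.2.1 - η.1 * mm.2.1) / 2|
        ≤ |mm.2.2 + η.2.2| + |(mm.1 * η.2.1 - η.1 * mm.2.1) / 2| := abs_add_le _ _
      _ ≤ (|mm.2.2| + |η.2.2|) + (|mm.1 * η.2.1| + |η.1 * mm.2.1|)/2 := by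
          gcongr
          · exact abs_add_le _ _
          · rw [abs_div]
            simp only [abs_two]
            gcongr
            exact abs_sub _ _ 
      _ ≤ 3*R := by linarith
  exact mem_ball_coords hb1 hb2 hb3


/-- The horizontal-gradient components of `x ↦ d • |x·a⁻¹|⁴`. -/
def sigX (d : ℝ) (p a : Heis) : ℝ × ℝ :=
  (d * (4*(p.1-a.1)*((p.1-a.1)^2+(p.2.1-a.2.1)^2)
      - 16*(p.2.2 - a.2.2 - (p.1*a.2.1 - a.1*p.2.1)/2)*(p.2.1 + a.2.1)),
   d * (4*(p.2.1-a.2.1)*((p.1-a.1)^2+(p.2.1-a.2.1)^2)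
      + 16*(p.2.2 - a.2.2 - (p.1*a.2.1 - a.1*p.2.1)/2)*(p.1 + a.1)))

lemma phi_deriv (c : ℝ) (a p : Heis) :
    ∃ L : Heis →L[ℝ] ℝ, HasFDerivAt (fun x : Heis => c * Ffun (hmul x (hinv a))) L p ∧
      ∀ w1 w2 : ℝ, L (w1, w2, (p.1 * w2 - w1 * p.2.1) / 2) =
        w1 * (sigX c p a).1 + w2 * (sigX c p a).2 := by
  have h1 : HasFDerivAt (fun x : Heis => x.1)
      (ContinuousLinearMap.fst ℝ ℝ (ℝ × ℝ)) p := hasFDerivAt_fst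
  have h2 : HasFDerivAt (fun x : Heis => x.2.1)
      ((ContinuousLinearMap.fst ℝ ℝ ℝ).comp (ContinuousLinearMap.snd ℝ ℝ (ℝ × ℝ))) p :=
    hasFDerivAt_fst.comp p hasFDerivAt_snd
  have h3 : HasFDerivAt (fun x : Heis => x.2.2)
      ((ContinuousLinearMap.snd ℝ ℝ ℝ).comp (ContinuousLinearMap.snd ℝ ℝ (ℝ × ℝ))) p :=
    hasFDerivAt_snd.comp p hasFDerivAt_snd
  have hzx := h1.sub_const a.1
  have hzy := h2.sub_const a.2.1
  have hzz := (h3.sub_const a.2.2).add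
    (((h1.mul_const a.2.1).sub (h2.const_mul a.1)).mul_const (-(1/2)))
  have hE := (hzx.mul hzx).add (hzy.mul hzy)
  have hF := (hE.mul hE).add ((hzz.mul hzz).const_mul 16)
  have hfin := hF.const_mul c
  refine ⟨_, hfin.congr_of_eventuallyEq (Filter.Eventually.of_forall fun x => ?_),
    fun w1 w2 => ?_⟩
  · simp only [Ffun, hmul, hinv, Pi.add_apply, Pi.mul_apply, Pi.sub_apply, Pi.neg_apply, Pi.pow_apply]; ring
  · simp only [sigX]
    simp [ContinuousLinearMap.smul_apply, smul_eq_mul]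
    ring

lemma psi_deriv (c : ℝ) (b q : Heis) :
    ∃ L : Heis →L[ℝ] ℝ, HasFDerivAt (fun y : Heis => -(c * Ffun (hmul b (hinv y)))) L q ∧
      ∀ w1 w2 : ℝ, L (w1, w2, (q.1 * w2 - w1 * q.2.1) / 2) =
        w1 * (sigX c b q).1 + w2 * (sigX c b q).2 := by
  have h1 : HasFDerivAt (fun x : Heis => x.1)
      (ContinuousLinearMap.fst ℝ ℝ (ℝ × ℝ)) q := hasFDerivAt_fst
  have h2 : HasFDerivAt (fun x : Heis => x.2.1)
      ((ContinuousLinearMap.fst ℝ ℝ ℝ).comp (ContinuousLinearMap.snd ℝ ℝ (ℝ × ℝ))) q :=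
    hasFDerivAt_fst.comp q hasFDerivAt_snd
  have h3 : HasFDerivAt (fun x : Heis => x.2.2)
      ((ContinuousLinearMap.snd ℝ ℝ ℝ).comp (ContinuousLinearMap.snd ℝ ℝ (ℝ × ℝ))) q :=
    hasFDerivAt_snd.comp q hasFDerivAt_snd
  have hzx := h1.const_sub b.1
  have hzy := h2.const_sub b.2.1
  have hzz := (h3.const_sub b.2.2).add
    (((h1.mul_const b.2.1).sub (h2.const_mul b.1)).mul_const (1/2))
  have hE := (hzx.mul hzx).add (hzy.mul hzy)
  have hF := (hE.mul hE).add ((hzz.mul hzz).const_mul 16)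
  have hfin := (hF.const_mul c).neg
  refine ⟨_, hfin.congr_of_eventuallyEq (Filter.Eventually.of_forall fun x => ?_),
    fun w1 w2 => ?_⟩
  · simp only [Ffun, hmul, hinv, Pi.add_apply, Pi.mul_apply, Pi.sub_apply, Pi.neg_apply, Pi.pow_apply]; ring
  · simp only [sigX]
    simp [ContinuousLinearMap.smul_apply, smul_eq_mul]
    ring

lemma contdiff_phi (c : ℝ) (a : Heis) :
    ContDiff ℝ 1 (fun x : Heis => c * Ffun (hmul x (hinv a))) := by
  have : (fun x : Heis => c * Ffun (hmul x (hinv a))) = fun x : Heis =>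
      c * (((x.1 - a.1)^2 + (x.2.1 - a.2.1)^2)^2
        + 16*(x.2.2 - a.2.2 + (x.1 * -a.2.1 - -a.1 * x.2.1) * (1/2))^2) := by
    funext x; simp only [Ffun, hmul, hinv]; ring
  rw [this]; fun_prop

lemma contdiff_psi (c : ℝ) (b : Heis) :
    ContDiff ℝ 1 (fun y : Heis => -(c * Ffun (hmul b (hinv y)))) := by
  have : (fun y : Heis => -(c * Ffun (hmul b (hinv y)))) = fun y : Heis =>
      -(c * (((b.1 - y.1)^2 + (b.2.1 - y.2.1)^2)^2
        + 16*(b.2.2 - y.2.2 + (y.1 * b.2.1 - b.1 * y.2.1) * (1/2))^2)) := by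
    funext y; simp only [Ffun, hmul, hinv]; ring
  rw [this]; fun_prop

lemma hGrad_phi (c : ℝ) (a p : Heis) :
    hGrad (fun x : Heis => c * Ffun (hmul x (hinv a))) p = sigX c p a := by
  obtain ⟨L, HL, Hval⟩ := phi_deriv c a p
  have h1 := Hval 1 0
  have h2 := Hval 0 1
  have e1 : (p.1 * (0:ℝ) - 1 * p.2.1) / 2 = -p.2.1 / 2 := by ring
  have e2 : (p.1 * (1:ℝ) - 0 * p.2.1) / 2 = p.1 / 2 := by ring
  rw [e1] at h1
  rw [e2] at h2
  simp only [hGrad, HL.fderiv]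
  rw [h1, h2]
  ext <;> simp <;> ring

lemma hGrad_psi (c : ℝ) (b q : Heis) :
    hGrad (fun y : Heis => -(c * Ffun (hmul b (hinv y)))) q = sigX c b q := by
  obtain ⟨L, HL, Hval⟩ := psi_deriv c b q
  have h1 := Hval 1 0
  have h2 := Hval 0 1
  have e1 : (q.1 * (0:ℝ) - 1 * q.2.1) / 2 = -q.2.1 / 2 := by ring
  have e2 : (q.1 * (1:ℝ) - 0 * q.2.1) / 2 = q.1 / 2 := by ring
  rw [e1] at h1
  rw [e2] at h2
  simp only [hGrad, HL.fderiv]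
  rw [h1, h2]
  ext <;> simp <;> ring

/-- The linear tie-breaking functional. -/
def Wfun (d : ℝ) (mm : Heis) (q : Heis) : ℝ :=
  (d*4*mm.1*(mm.1^2 + mm.2.1^2) - d*32*mm.2.2*mm.2.1/2) * q.1
  + (d*4*mm.2.1*(mm.1^2 + mm.2.1^2) + d*32*mm.2.2*mm.1/2) * q.2.1
  + 2*(d*32*mm.2.2)*q.2.2

lemma cont_Wfun (d : ℝ) (mm : Heis) : Continuous (Wfun d mm) := by
  unfold Wfun; fun_prop

lemma Wfun_incr (d : ℝ) (mm q h p : Heis) (hh : h.2.2 = 0) (hp : p = hmul mm q) :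
    Wfun d mm (hmul q h) - Wfun d mm q = h.1 * (sigX d p q).1 + h.2.1 * (sigX d p q).2 := by
  subst hp
  simp only [Wfun, sigX, hmul, hh]
  ring


lemma usc_exists_max {X : Type*} [TopologicalSpace X] [FirstCountableTopology X]
    {s : Set X} (hs : IsCompact s) (hne : s.Nonempty) {g : X → ℝ}
    (hg : ∀ x ∈ s, UpperSemicontinuousWithinAt g s x) :
    ∃ x ∈ s, ∀ y ∈ s, g y ≤ g x := by
  have hbdd : BddAbove (g '' s) := by
    by_contra hb
    have : ∀ n : ℕ, ∃ x ∈ s, (n : ℝ) ≤ g x := by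
      intro n
      rcases not_bddAbove_iff.1 hb (n : ℝ) with ⟨y, ⟨x, hx, rfl⟩, hy⟩
      exact ⟨x, hx, hy.le⟩
    choose x hxs hxg using this
    obtain ⟨a, has, φ, hφ, hconv⟩ := hs.tendsto_subseq hxs
    have hconv' : Filter.Tendsto (x ∘ φ) Filter.atTop (nhds a ⊓ Filter.principal s) :=
      Filter.tendsto_inf.2 ⟨hconv, Filter.tendsto_principal.2
        (Filter.Eventually.of_forall fun n => hxs _)⟩
    have hev : ∀ᶠ n in Filter.atTop, g ((x ∘ φ) n) < g a + 1 :=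
      hconv' (hg a has (g a + 1) (by linarith))
    have hub : ∀ᶠ n in Filter.atTop, (g a + 1 : ℝ) ≤ g ((x ∘ φ) n) := by
      have h4 : ∀ᶠ n : ℕ in Filter.atTop, (g a + 1 : ℝ) ≤ (φ n : ℝ) := by
        have : Filter.Tendsto (fun n => (φ n : ℝ)) Filter.atTop Filter.atTop :=
          tendsto_natCast_atTop_atTop.comp hφ.tendsto_atTop
        exact this.eventually_ge_atTop _
      exact h4.mono fun n hn => le_trans hn (hxg (φ n))
    obtain ⟨n, hn1, hn2⟩ := (hev.and hub).exists
    linarith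
  set S := sSup (g '' s) with hS
  have hne' : (g '' s).Nonempty := hne.image g
  have hseq : ∀ n : ℕ, ∃ x ∈ s, S - 1/(n+1) < g x := by
    intro n
    have h5 : S - 1/(n+1) < S := by
      have : (0:ℝ) < 1/(n+1) := by positivity
      linarith
    rcases exists_lt_of_lt_csSup hne' h5 with ⟨y, ⟨x, hx, rfl⟩, hy⟩
    exact ⟨x, hx, hy⟩
  choose x hxs hxg using hseq
  obtain ⟨a, has, φ, hφ, hconv⟩ := hs.tendsto_subseq hxs
  refine ⟨a, has, fun y hy => ?_⟩
  have hyS : g y ≤ S := le_csSup hbdd ⟨y, hy, rfl⟩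
  suffices hga : S ≤ g a by linarith
  by_contra hlt
  push_neg at hlt
  obtain ⟨z, hz1, hz2⟩ := exists_between hlt
  have hconv' : Filter.Tendsto (x ∘ φ) Filter.atTop (nhds a ⊓ Filter.principal s) :=
    Filter.tendsto_inf.2 ⟨hconv, Filter.tendsto_principal.2
      (Filter.Eventually.of_forall fun n => hxs _)⟩
  have hev : ∀ᶠ n in Filter.atTop, g ((x ∘ φ) n) < z := hconv' (hg a has z hz1)
  have hub : ∀ᶠ n in Filter.atTop, z < g ((x ∘ φ) n) := by
    have hz : ∀ᶠ n : ℕ in Filter.atTop, S - 1/((φ n : ℝ)+1) > z := by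
      have ht : Filter.Tendsto (fun n : ℕ => S - 1/((φ n : ℝ)+1)) Filter.atTop (nhds S) := by
        have h1 : Filter.Tendsto (fun n : ℕ => ((φ n : ℝ)+1)) Filter.atTop Filter.atTop :=
          Filter.tendsto_atTop_add_const_right _ 1
            (tendsto_natCast_atTop_atTop.comp hφ.tendsto_atTop)
        have := h1.inv_tendsto_atTop
        simpa [one_div] using (tendsto_const_nhds (x := S)).sub this
      exact ht.eventually_const_lt hz2
    exact hz.mono fun n hn => lt_of_lt_of_le hn (hxg (φ n)).le
  obtain ⟨n, hn1, hn2⟩ := (hev.and hub).exists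
  linarith

open Classical in
lemma usc_extend {Ω : Set Heis} (hΩo : IsOpen Ω) {u : Heis → ℝ} {K : ℝ}
    (husc : UpperSemicontinuousOn u (closure Ω)) (huK : ∀ p ∈ closure Ω, u p ≤ K) :
    UpperSemicontinuous (fun p => if p ∈ Ω then u p else K) := by
  intro x y hxy
  by_cases hxc : x ∈ closure Ω
  · have hux : u x < y := by
      by_cases hx : x ∈ Ω
      · simpa [hx] using hxy
      · simp only [hx, if_false] at hxy; exact lt_of_le_of_lt (huK x hxc) hxy
    have h1 : ∀ᶠ z in nhds x, z ∈ closure Ω → u z < y := by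
      have := husc x hxc y hux
      rwa [eventually_nhdsWithin_iff] at this
    by_cases hx : x ∈ Ω
    · filter_upwards [h1, hΩo.eventually_mem hx] with z hz hzΩ
      simp only [hzΩ, if_true]
      exact hz (subset_closure hzΩ)
    · have hKy : K < y := by simpa [hx] using hxy
      filter_upwards [h1] with z hz
      by_cases hzΩ : z ∈ Ω
      · simp only [hzΩ, if_true]; exact hz (subset_closure hzΩ)
      · simpa [hzΩ] using hKy
  · have hKy : K < y := by
      have hx : x ∉ Ω := fun h => hxc (subset_closure h)
      simpa [hx] using hxy
    have h2 : ∀ᶠ z in nhds x, z ∈ (closure Ω)ᶜ :=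
      isClosed_closure.isOpen_compl.eventually_mem hxc
    filter_upwards [h2] with z hz
    have : z ∉ Ω := fun h => hz (subset_closure h)
    simpa [this] using hKy

open Classical in
lemma lsc_extend {Ω : Set Heis} (hΩo : IsOpen Ω) {v : Heis → ℝ} {K : ℝ}
    (hvlsc : LowerSemicontinuousOn v (closure Ω))
    (hbK : ∀ p ∈ closure Ω, p ∉ Ω → v p = K) :
    LowerSemicontinuous (fun p => if p ∈ Ω then v p else K) := by
  intro x y hxy
  by_cases hxc : x ∈ closure Ω
  · have hvx : y < v x := by
      by_cases hx : x ∈ Ω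
      · simpa [hx] using hxy
      · simp only [hx, if_false] at hxy; rwa [hbK x hxc hx]
    have h1 : ∀ᶠ z in nhds x, z ∈ closure Ω → y < v z := by
      have := hvlsc x hxc y hvx
      rwa [eventually_nhdsWithin_iff] at this
    by_cases hx : x ∈ Ω
    · filter_upwards [h1, hΩo.eventually_mem hx] with z hz hzΩ
      simp only [hzΩ, if_true]
      exact hz (subset_closure hzΩ)
    · have hKy : y < K := by simpa [hx] using hxy
      filter_upwards [h1] with z hz
      by_cases hzΩ : z ∈ Ω
      · simp only [hzΩ, if_true]; exact hz (subset_closure hzΩ)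
      · simpa [hzΩ] using hKy
  · have hKy : y < K := by
      have hx : x ∉ Ω := fun h => hxc (subset_closure h)
      simpa [hx] using hxy
    have h2 : ∀ᶠ z in nhds x, z ∈ (closure Ω)ᶜ :=
      isClosed_closure.isOpen_compl.eventually_mem hxc
    filter_upwards [h2] with z hz
    have : z ∉ Ω := fun h => hz (subset_closure h)
    simpa [this] using hKy

lemma Phi_usc {U V : Heis → ℝ} (hU : UpperSemicontinuous U) (hV : LowerSemicontinuous V)
    (d : ℝ) (x : Heis × Heis) :
    UpperSemicontinuousAt
      (fun w : Heis × Heis => U w.1 - V w.2 - d * Ffun (hmul w.1 (hinv w.2))) x := by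
  intro y hxy
  set g : Heis × Heis → ℝ := fun w => d * Ffun (hmul w.1 (hinv w.2)) with hgdef
  have hgc : Continuous g := continuous_const.mul cont_gauge
  have hxy' : U x.1 - V x.2 - g x < y := hxy
  set ε := (y - (U x.1 - V x.2 - g x))/3 with hε
  have hε0 : 0 < ε := by simp only [hε]; linarith
  have h1 : ∀ᶠ w in nhds x, U w.1 < U x.1 + ε :=
    (continuous_fst.tendsto x).eventually (hU x.1 (U x.1 + ε) (by linarith))
  have h2 : ∀ᶠ w in nhds x, V x.2 - ε < V w.2 :=
    (continuous_snd.tendsto x).eventually (hV x.2 (V x.2 - ε) (by linarith))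
  have h3 : ∀ᶠ w in nhds x, g x - ε < g w :=
    (hgc.tendsto x).eventually_const_lt (by linarith)
  filter_upwards [h1, h2, h3] with w hw1 hw2 hw3
  show U w.1 - V w.2 - g w < y
  linarith

lemma UV_usc {U V : Heis → ℝ} (hU : UpperSemicontinuous U) (hV : LowerSemicontinuous V)
    (mm : Heis) : UpperSemicontinuous (fun q : Heis => U (hmul mm q) - V q) := by
  intro x y hxy
  have hxy' : U (hmul mm x) - V x < y := hxy
  set ε := (y - (U (hmul mm x) - V x))/2 with hε
  have hε0 : 0 < ε := by simp only [hε]; linarith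
  have hcont : Continuous (fun q : Heis => hmul mm q) :=
    cont_hmul.comp (continuous_const.prodMk continuous_id)
  have h1 : ∀ᶠ z in nhds x, U (hmul mm z) < U (hmul mm x) + ε :=
    (hcont.tendsto x).eventually (hU (hmul mm x) (U (hmul mm x) + ε) (by linarith))
  have h2 : ∀ᶠ z in nhds x, V x - ε < V z := hV x (V x - ε) (by linarith)
  filter_upwards [h1, h2] with z hz1 hz2
  show U (hmul mm z) - V z < y
  linarith


lemma smul_triple (t a b c : ℝ) : t • ((a, b, c) : Heis) = (t*a, t*b, t*c) := rfl

lemma usub_le_f {Ω : Set Heis} (hΩo : IsOpen Ω) {f u : Heis → ℝ} (hsub : IsSubSoln Ω f u)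
    {p : Heis} (hp : p ∈ Ω) (d : ℝ) (a : Heis)
    (hmax : IsMaxOn (fun x => u x - (fun x : Heis => d * Ffun (hmul x (hinv a))) x) Ω p) :
    u p ≤ f p := by
  set φt : Heis → ℝ := fun x => d * Ffun (hmul x (hinv a)) with hφt
  obtain ⟨hc1, hc2⟩ := hsub.2.2 p hp φt (contdiff_phi d a) hmax
  have hgrad : hGrad φt p = sigX d p a := hGrad_phi d a p
  by_cases hz : sigX d p a = 0
  · exact hc2 (by rw [hgrad, hz])
  set σ1 := (sigX d p a).1 with hσ1
  set σ2 := (sigX d p a).2 with hσ2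
  have hpos : 0 < σ1^2 + σ2^2 := by
    have hor : σ1 ≠ 0 ∨ σ2 ≠ 0 := by
      by_contra hcc; push_neg at hcc
      exact hz (Prod.ext hcc.1 hcc.2)
    rcases hor with h | h
    · have : 0 < σ1^2 := by positivity
      nlinarith [sq_nonneg σ2]
    · have : 0 < σ2^2 := by positivity
      nlinarith [sq_nonneg σ1]
  obtain ⟨L, HL, Hval⟩ := phi_deriv d a p
  set V : Heis := ((-σ1 : ℝ), (-σ2 : ℝ), (p.1 * (-σ2) - (-σ1) * p.2.1)/2) with hV
  have hLV : L V = -(σ1^2 + σ2^2) := by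
    rw [hV]
    rw [Hval (-σ1) (-σ2)]
    ring
  set cfn : ℝ → Heis := fun t => p + t • V with hcfn
  have hc0 : cfn 0 = p := by simp [hcfn]
  have hcd : HasDerivAt cfn V 0 := by
    simpa [hcfn] using ((hasDerivAt_id (0:ℝ)).smul_const V).const_add p
  have HL' : HasFDerivAt φt L (cfn 0) := by rw [hc0]; exact HL
  have hφc : HasDerivAt (fun t => φt (cfn t)) (L V) 0 := HL'.comp_hasDerivAt 0 hcd
  have hslope := hasDerivAt_iff_tendsto_slope.1 hφc
  have h3 : Filter.Tendsto (slope (fun t => φt (cfn t)) 0) (nhdsWithin 0 (Set.Ioi 0))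
      (nhds (L V)) :=
    hslope.mono_left (nhdsWithin_mono 0 (fun t ht => ne_of_gt ht))
  have hev1 : ∀ᶠ t in nhdsWithin 0 (Set.Ioi 0), slope (fun t => φt (cfn t)) 0 t < 0 :=
    h3.eventually_lt_const (by rw [hLV]; linarith)
  have hev2 : ∀ᶠ t in nhdsWithin 0 (Set.Ioi 0), cfn t ∈ Ω := by
    have hct : Filter.Tendsto cfn (nhds 0) (nhds p) := by
      have := hcd.continuousAt.tendsto
      rwa [hc0] at this
    exact (hct.eventually (hΩo.eventually_mem hp)).filter_mono nhdsWithin_le_nhds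
  have hev3 : ∀ᶠ t in nhdsWithin 0 (Set.Ioi 0), (0:ℝ) < t :=
    eventually_mem_nhdsWithin
  have hkey : ∀ᶠ t in nhdsWithin 0 (Set.Ioi 0), u p ≤ f p + t * (σ1^2 + σ2^2) := by
    filter_upwards [hev1, hev2, hev3] with t ht1 ht2 ht3
    have hcurve : cfn t = hmul p (t • ((-σ1, -σ2, 0) : Heis)) := by
      rw [smul_triple]
      simp only [hcfn, hV, hmul]
      ext <;> simp <;> ring
    have hgt : φt (cfn t) < φt (cfn 0) := by
      rw [slope_def_field] at ht1
      have h6 := (div_lt_iff₀ (by simpa using ht3)).mp (by simpa using ht1)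
      simp only [zero_mul] at h6
      linarith
    rw [hc0] at hgt
    have huct : u (cfn t) < u p := by
      have h7 : u (cfn t) - φt (cfn t) ≤ u p - φt p := hmax ht2
      linarith
    have hplmem : cfn t ∈ hplane p := by
      refine ⟨t • ((-σ1, -σ2, 0) : Heis), ?_, hcurve⟩
      rw [smul_triple]; simp
    have happ := hc1 (cfn t) hplmem ht2 huct
    have hpairval : hpair φt p (cfn t) = σ1 * (t * (-σ1)) + σ2 * (t * (-σ2)) := by
      unfold hpair
      rw [hcurve, hinv_hmul_cancel, hgrad, smul_triple]
    rw [hpairval] at happ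
    nlinarith
  have htend : Filter.Tendsto (fun t : ℝ => f p + t * (σ1^2 + σ2^2))
      (nhdsWithin 0 (Set.Ioi 0)) (nhds (f p)) := by
    have hco : Continuous (fun t : ℝ => f p + t * (σ1^2 + σ2^2)) := by fun_prop
    have := (hco.tendsto 0).mono_left (nhdsWithin_le_nhds (s := Set.Ioi (0:ℝ)))
    simpa using this
  exact ge_of_tendsto htend hkey

end CPaux

open CPaux Filter

/-- Theorem 3.5 (Comparison principle): if `u` is a subsolution and `v` a
supersolution of `u + H(p,u,∇_H u) = f` in a bounded domain `Ω`, with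
`u ≤ v = K` on `∂Ω` and `u ≤ K` in `Ω̄`, then `u ≤ v` in `Ω̄`. -/


theorem comparison_principle
    (Ω : Set Heis) (hΩo : IsOpen Ω) (hΩconn : IsConnected Ω)
    (hΩb : Bornology.IsBounded Ω)
    (f : Heis → ℝ) (hf : ContinuousOn f Ω)
    (u v : Heis → ℝ)
    (husc : UpperSemicontinuousOn u (closure Ω))
    (hvlsc : LowerSemicontinuousOn v (closure Ω))
    (hsub : IsSubSoln Ω f u) (hsuper : IsSuperSoln Ω f v)
    (K : ℝ)
    (hbdry : ∀ p ∈ frontier Ω, u p ≤ v p ∧ v p = K)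
    (huK : ∀ p ∈ closure Ω, u p ≤ K) :
    ∀ p ∈ closure Ω, u p ≤ v p := by
  classical
  by_contra hcon
  push_neg at hcon
  obtain ⟨p₀, hp₀cl, hp₀lt⟩ := hcon
  set θ : ℝ := u p₀ - v p₀ with hθdef
  have hθ : 0 < θ := by simp only [hθdef]; linarith
  have hp₀Ω : p₀ ∈ Ω := by
    by_contra hx
    have hfr : p₀ ∈ frontier Ω := by
      rw [hΩo.frontier_eq]; exact ⟨hp₀cl, hx⟩
    have := (hbdry p₀ hfr).1
    linarith
  -- extensions
  set U : Heis → ℝ := fun p => if p ∈ Ω then u p else K with hUdef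
  set V : Heis → ℝ := fun p => if p ∈ Ω then v p else K with hVdef
  have hU : UpperSemicontinuous U := usc_extend hΩo husc huK
  have hbK : ∀ p ∈ closure Ω, p ∉ Ω → v p = K := fun p hpc hpn =>
    (hbdry p (by rw [hΩo.frontier_eq]; exact ⟨hpc, hpn⟩)).2
  have hV : LowerSemicontinuous V := lsc_extend hΩo hvlsc hbK
  have hUu : ∀ p ∈ Ω, U p = u p := fun p hp => if_pos hp
  have hVv : ∀ p ∈ Ω, V p = v p := fun p hp => if_pos hp
  have hUn : ∀ p, p ∉ Ω → U p = K := fun p hp => if_neg hp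
  have hVn : ∀ p, p ∉ Ω → V p = K := fun p hp => if_neg hp
  have hUK : ∀ p, U p ≤ K := by
    intro p; by_cases hp : p ∈ Ω
    · rw [hUu p hp]; exact huK p (subset_closure hp)
    · rw [hUn p hp]
  -- geometry
  obtain ⟨R₀, hR₀⟩ := hΩb.closure.subset_closedBall (0 : Heis)
  set R : ℝ := max R₀ 1 with hRdef
  have hRsub : closure Ω ⊆ Metric.closedBall 0 R :=
    hR₀.trans (Metric.closedBall_subset_closedBall (le_max_left _ _))
  have hclcomp : IsCompact (closure Ω) :=
    (isCompact_closedBall (0:Heis) R).of_isClosed_subset isClosed_closure hRsub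
  set D : Set (Heis × Heis) := Metric.closedBall 0 R ×ˢ closure Ω with hDdef
  have hDcomp : IsCompact D := (isCompact_closedBall _ _).prod hclcomp
  have hp₀D : ((p₀, p₀) : Heis × Heis) ∈ D :=
    ⟨hRsub (subset_closure hp₀Ω), subset_closure hp₀Ω⟩
  have hDne : D.Nonempty := ⟨_, hp₀D⟩
  -- min of V on the closure
  have hVneg : UpperSemicontinuous (fun q : Heis => -V q) := by
    intro x y hy
    have hy' : -V x < y := hy
    exact (hV x (-y) (by linarith)).mono fun z hz => by
      show -V z < y; linarith
  obtain ⟨qm, hqm, hqmax⟩ := usc_exists_max (g := fun q : Heis => -V q) hclcomp ⟨p₀, subset_closure hp₀Ω⟩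
    (fun x _ => (hVneg.upperSemicontinuousAt x).upperSemicontinuousWithinAt _)
  set mv : ℝ := V qm with hmvdef
  have hmvle : ∀ q ∈ closure Ω, mv ≤ V q := by
    intro q hq
    have := hqmax q hq
    linarith
  set C : ℝ := max (K - mv) 1 with hCdef
  have hC1 : (1:ℝ) ≤ C := le_max_right _ _
  -- maximizers of the doubling functional
  have hmaxdata : ∀ n : ℕ, ∃ z : Heis × Heis, z ∈ D ∧ ∀ w ∈ D,
      U w.1 - V w.2 - ((n:ℝ)+1) * Ffun (hmul w.1 (hinv w.2)) ≤
      U z.1 - V z.2 - ((n:ℝ)+1) * Ffun (hmul z.1 (hinv z.2)) := fun n =>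
    usc_exists_max hDcomp hDne
      (fun x _ => (Phi_usc hU hV ((n:ℝ)+1) x).upperSemicontinuousWithinAt _)
  choose PQ hPQD hPQmax using hmaxdata
  set m : ℕ → Heis := fun n => hmul (PQ n).1 (hinv (PQ n).2) with hmdef
  set θn : ℕ → ℝ := fun n => U (PQ n).1 - V (PQ n).2 with hθndef
  have hθlow : ∀ n : ℕ, θ + ((n:ℝ)+1) * Ffun (m n) ≤ θn n := by
    intro n
    have h0 : U p₀ - V p₀ - ((n:ℝ)+1) * Ffun (hmul p₀ (hinv p₀)) ≤
        θn n - ((n:ℝ)+1) * Ffun (m n) := hPQmax n (p₀, p₀) hp₀D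
    rw [hmul_hinv_self, Ffun_zero, mul_zero, sub_zero, hUu p₀ hp₀Ω, hVv p₀ hp₀Ω] at h0
    simp only [hθdef] at *
    linarith
  have hθge : ∀ n : ℕ, θ ≤ θn n := by
    intro n
    have h1 := hθlow n
    have h2 : 0 ≤ ((n:ℝ)+1) * Ffun (m n) :=
      mul_nonneg (by positivity) (Ffun_nonneg _)
    linarith
  have hθnub : ∀ n : ℕ, θn n ≤ C := by
    intro n
    have h1 : U (PQ n).1 ≤ K := hUK _
    have h2 : mv ≤ V (PQ n).2 := hmvle _ (hPQD n).2
    have h3 : θn n ≤ K - mv := by simp only [hθndef]; linarith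
    exact le_trans h3 (le_max_left _ _)
  have hFnb : ∀ n : ℕ, Ffun (m n) ≤ C / ((n:ℝ)+1) := by
    intro n
    have h1 := hθlow n
    have h2 := hθnub n
    have hd : (0:ℝ) < (n:ℝ)+1 := by positivity
    rw [le_div_iff₀ hd]
    nlinarith [hθ]
  have hCn0 : Tendsto (fun n : ℕ => C / ((n:ℝ)+1)) atTop (nhds 0) := by
    have h2 := tendsto_one_div_add_atTop_nhds_zero_nat.const_mul C
    simpa [div_eq_mul_inv, one_div] using h2
  have hmlim : Tendsto m atTop (nhds 0) := by
    have hsq : Tendsto (fun n : ℕ => Real.sqrt (C / ((n:ℝ)+1))) atTop (nhds 0) := by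
      have := (Real.continuous_sqrt.tendsto 0).comp hCn0
      simpa [Function.comp_def] using this
    have hsq2 : Tendsto (fun n : ℕ => Real.sqrt (Real.sqrt (C / ((n:ℝ)+1)))) atTop (nhds 0) := by
      have := (Real.continuous_sqrt.tendsto 0).comp hsq
      simpa [Function.comp_def] using this
    have hgb : Tendsto (fun n : ℕ => Real.sqrt (Real.sqrt (C / ((n:ℝ)+1)))
        + Real.sqrt (C / ((n:ℝ)+1))) atTop (nhds 0) := by
      have := hsq2.add hsq
      simpa using this
    apply squeeze_zero_norm _ hgb
    intro n
    obtain ⟨hb1, hb2, hb3⟩ := Ffun_bounds (le_refl (Ffun (m n)))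
    obtain ⟨c1, c2, c3⟩ := Ffun_bounds (hFnb n)
    rw [Prod.norm_def, Prod.norm_def]
    have hs1 : 0 ≤ Real.sqrt (Real.sqrt (C / ((n:ℝ)+1))) := Real.sqrt_nonneg _
    have hs2 : 0 ≤ Real.sqrt (C / ((n:ℝ)+1)) := Real.sqrt_nonneg _
    refine max_le ?_ (max_le ?_ ?_)
    · rw [Real.norm_eq_abs]; linarith
    · rw [Real.norm_eq_abs]; linarith
    · rw [Real.norm_eq_abs]; linarith
  -- the tie-breaking maximizers
  set Zn : ℕ → Set Heis := fun n =>
    {q' | q' ∈ closure Ω ∧ θn n ≤ U (hmul (m n) q') - V q'} with hZdef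
  have hZcl : ∀ n : ℕ, IsClosed (Zn n) := by
    intro n
    have hGusc : UpperSemicontinuous (fun q' => U (hmul (m n) q') - V q') := UV_usc hU hV (m n)
    have h1 : IsClosed {q' : Heis | θn n ≤ U (hmul (m n) q') - V q'} := by
      have he : {q' : Heis | θn n ≤ U (hmul (m n) q') - V q'} =
          ((fun q' => U (hmul (m n) q') - V q') ⁻¹' Set.Iio (θn n))ᶜ := by
        ext q'; simp [not_lt]
      rw [he]
      exact (hGusc.isOpen_preimage _).isClosed_compl
    have he2 : Zn n = closure Ω ∩ {q' : Heis | θn n ≤ U (hmul (m n) q') - V q'} := rfl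
    rw [he2]
    exact isClosed_closure.inter h1
  have hZcomp : ∀ n, IsCompact (Zn n) :=
    fun n => hclcomp.of_isClosed_subset (hZcl n) (fun q' h => h.1)
  have hZne : ∀ n : ℕ, (PQ n).2 ∈ Zn n := by
    intro n
    refine ⟨(hPQD n).2, ?_⟩
    rw [hmdef]
    simp only
    rw [hmul_hinv_mul]
  have hWmax : ∀ n : ℕ, ∃ qq ∈ Zn n, ∀ q' ∈ Zn n,
      Wfun ((n:ℝ)+1) (m n) q' ≤ Wfun ((n:ℝ)+1) (m n) qq := by
    intro n
    obtain ⟨z, hz, hmax⟩ := (hZcomp n).exists_isMaxOn ⟨_, hZne n⟩ ((cont_Wfun _ _).continuousOn)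
    exact ⟨z, hz, fun q' hq' => hmax hq'⟩
  choose qs hqsZ hqsW using hWmax
  set ps : ℕ → Heis := fun n => hmul (m n) (qs n) with hpsdef
  have hqsub : ∀ n : ℕ, θn n ≤ U (ps n) - V (qs n) := fun n => (hqsZ n).2
  have hqsΩ : ∀ n : ℕ, qs n ∈ Ω := by
    intro n
    by_contra hq
    have h1 := hqsub n
    have h2 : V (qs n) = K := hVn _ hq
    have h3 : U (ps n) ≤ K := hUK _
    have h4 := hθge n
    rw [h2] at h1
    linarith
  -- subsequence
  obtain ⟨qbar, hqbarcl, φ₁, hφ₁, hconv⟩ := hclcomp.tendsto_subseq (fun n => (hqsZ n).1)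
  have hm1 : Tendsto (fun k => m (φ₁ k)) atTop (nhds 0) := hmlim.comp hφ₁.tendsto_atTop
  have hpsconv : Tendsto (fun k => ps (φ₁ k)) atTop (nhds qbar) := by
    have h1 : Tendsto (fun k => ((m (φ₁ k), qs (φ₁ k)) : Heis × Heis)) atTop
        (nhds ((0 : Heis), qbar)) := hm1.prodMk_nhds hconv
    have h2 := (cont_hmul.tendsto ((0 : Heis), qbar)).comp h1
    simp only [Function.comp_def] at h2
    rw [hmul_zero_left] at h2
    exact h2
  have hqbarΩ : qbar ∈ Ω := by
    by_contra hq
    have hVq : V qbar = K := hVn _ hq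
    have hUq : U qbar = K := hUn _ hq
    have h1 : ∀ᶠ k in atTop, U (ps (φ₁ k)) < K + θ/3 :=
      hpsconv.eventually (hU qbar (K + θ/3) (by show U qbar < _; rw [hUq]; linarith))
    have h2 : ∀ᶠ k in atTop, K - θ/3 < V (qs (φ₁ k)) :=
      hconv.eventually (hV qbar (K - θ/3) (by show _ < V qbar; rw [hVq]; linarith))
    obtain ⟨k, hk1, hk2⟩ := (h1.and h2).exists
    have h3 := le_trans (hθge (φ₁ k)) (hqsub (φ₁ k))
    linarith
  have hfq : ContinuousAt f qbar := hf.continuousAt (hΩo.mem_nhds hqbarΩ)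
  have hfev : ∀ᶠ k in atTop, |f (ps (φ₁ k)) - f (qs (φ₁ k))| < θ/8 := by
    have h1 : Tendsto (fun k => f (ps (φ₁ k)) - f (qs (φ₁ k))) atTop (nhds 0) := by
      have := (hfq.tendsto.comp hpsconv).sub (hfq.tendsto.comp hconv)
      simpa using this
    have h2 := h1.abs
    simp only [abs_zero] at h2
    exact h2.eventually_lt_const (by linarith)
  have hpsΩev : ∀ᶠ k in atTop, ps (φ₁ k) ∈ Ω := hpsconv.eventually (hΩo.eventually_mem hqbarΩ)
  obtain ⟨N, hN⟩ := eventually_atTop.1 (hpsΩev.and hfev)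
  -- the main claim
  have hclaim : ∀ k ≥ N, ∃ η, η ∈ Ω ∧ v η ≤ K - θ ∧ hmul (m (φ₁ k)) η ∉ Ω := by
    intro k hk
    obtain ⟨hpΩ, hfpq⟩ := hN k hk
    set n := φ₁ k with hn
    -- basic facts at index n
    have hqΩ : qs n ∈ Ω := hqsΩ n
    have hUp : U (ps n) = u (ps n) := hUu _ hpΩ
    have hVq : V (qs n) = v (qs n) := hVv _ hqΩ
    have hthetak : θ ≤ u (ps n) - v (qs n) := by
      have h := le_trans (hθge n) (hqsub n)
      rwa [hUp, hVq] at h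
    have hpm : hmul (ps n) (hinv (qs n)) = m n := by
      rw [hpsdef]; exact hmul_hinv_cancel _ _
    -- transferred maximality
    have hmaxP : ∀ w ∈ D, U w.1 - V w.2 - ((n:ℝ)+1) * Ffun (hmul w.1 (hinv w.2)) ≤
        U (ps n) - V (qs n) - ((n:ℝ)+1) * Ffun (m n) := by
      intro w hw
      have h0 := hPQmax n w hw
      have h1 := hqsub n
      have h2 : θn n - ((n:ℝ)+1) * Ffun (m n) ≤
          U (ps n) - V (qs n) - ((n:ℝ)+1) * Ffun (m n) := by linarith
      exact le_trans h0 h2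
    -- subsolution side
    have hmaxφ : IsMaxOn
        (fun x => u x - (fun x : Heis => ((n:ℝ)+1) * Ffun (hmul x (hinv (qs n)))) x)
        Ω (ps n) := by
      intro x hx
      have h0 : U x - V (qs n) - ((n:ℝ)+1) * Ffun (hmul x (hinv (qs n))) ≤
          U (ps n) - V (qs n) - ((n:ℝ)+1) * Ffun (m n) :=
        hmaxP (x, qs n) ⟨hRsub (subset_closure hx), subset_closure hqΩ⟩
      rw [hUu x hx, hUp] at h0
      simp only [Set.mem_setOf_eq]
      rw [hpm]
      linarith
    have hupf : u (ps n) ≤ f (ps n) := usub_le_f hΩo hsub hpΩ ((n:ℝ)+1) (qs n) hmaxφ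
    -- supersolution side
    set ψt : Heis → ℝ := fun y => -(((n:ℝ)+1) * Ffun (hmul (ps n) (hinv y))) with hψt
    have hminψ : IsMinOn (fun y => v y - ψt y) Ω (qs n) := by
      intro x hx
      have h0 : U (ps n) - V x - ((n:ℝ)+1) * Ffun (hmul (ps n) (hinv x)) ≤
          U (ps n) - V (qs n) - ((n:ℝ)+1) * Ffun (m n) :=
        hmaxP (ps n, x) ⟨hRsub (subset_closure hpΩ), subset_closure hx⟩
      rw [hVv x hx] at h0
      simp only [Set.mem_setOf_eq, hψt]
      rw [hpm]
      linarith
    obtain ⟨η, hηpl, hηΩ, hηv, hηf⟩ := hsuper.2.2 (qs n) hqΩ ψt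
      (contdiff_psi ((n:ℝ)+1) (ps n)) hminψ (θ/8) (by linarith)
    obtain ⟨h0, hh3, hηeq⟩ := hηpl
    have hgradψ : hGrad ψt (qs n) = sigX ((n:ℝ)+1) (ps n) (qs n) := hGrad_psi _ _ _
    have hinvq : hmul (hinv (qs n)) η = h0 := by rw [hηeq]; exact hinv_hmul_cancel _ _
    set A : ℝ := (sigX ((n:ℝ)+1) (ps n) (qs n)).1 * h0.1
      + (sigX ((n:ℝ)+1) (ps n) (qs n)).2 * h0.2.1 with hA
    have hpairψ : hpair ψt (qs n) η = A := by
      unfold hpair; rw [hgradψ, hinvq]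
    rw [hpairψ] at hηf
    by_cases hAle : A ≤ θ/8
    · exfalso
      have habs := abs_lt.1 hfpq
      linarith
    · push_neg at hAle
      set ξ : Heis := hmul (ps n) h0 with hξdef
      have hξm : ξ = hmul (m n) η := by
        rw [hξdef, hηeq, hpsdef]
        simp only
        rw [hmul_assoc]
      by_cases hξΩ : ξ ∈ Ω
      · exfalso
        by_cases huξ : u ξ < u (ps n)
        · -- good case
          have hc1 := (hsub.2.2 (ps n) hpΩ _
            (contdiff_phi ((n:ℝ)+1) (qs n)) hmaxφ).1
          have hξpl : ξ ∈ hplane (ps n) := ⟨h0, hh3, hξdef⟩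
          have happ := hc1 ξ hξpl hξΩ huξ
          have hgradφ : hGrad (fun x : Heis => ((n:ℝ)+1) * Ffun (hmul x (hinv (qs n)))) (ps n)
              = sigX ((n:ℝ)+1) (ps n) (qs n) := hGrad_phi _ _ _
          have hpairφ : hpair (fun x : Heis => ((n:ℝ)+1) * Ffun (hmul x (hinv (qs n)))) (ps n) ξ
              = A := by
            unfold hpair
            rw [hgradφ, hξdef, hinv_hmul_cancel]
          rw [hpairφ] at happ
          have habs := abs_lt.1 hfpq
          linarith
        · -- tie case: contradict W-maximality
          push_neg at huξ
          have hηZ : η ∈ Zn n := by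
            refine ⟨subset_closure hηΩ, ?_⟩
            rw [← hξm]
            have hUξ : U ξ = u ξ := hUu _ hξΩ
            have hVη : V η = v η := hVv _ hηΩ
            have h1 := hqsub n
            rw [hUp, hVq] at h1
            rw [hUξ, hVη]
            linarith
          have hWle := hqsW n η hηZ
          have hps_eq : ps n = hmul (m n) (qs n) := by rw [hpsdef]
          have hWincr := Wfun_incr ((n:ℝ)+1) (m n) (qs n) h0 (ps n) hh3 hps_eq
          rw [← hηeq] at hWincr
          have hAe : Wfun ((n:ℝ)+1) (m n) η - Wfun ((n:ℝ)+1) (m n) (qs n) = A := by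
            rw [hWincr, hA]; ring
          linarith
      · -- boundary escape case: this is the conclusion
        refine ⟨η, hηΩ, ?_, ?_⟩
        · have h2 : u (ps n) ≤ K := huK _ (subset_closure hpΩ)
          linarith
        · rw [← hξm]; exact hξΩ
  -- final contradiction from the claim
  have hdata : ∀ j : ℕ, ∃ η, η ∈ Ω ∧ v η ≤ K - θ ∧ hmul (m (φ₁ (N + j))) η ∉ Ω :=
    fun j => hclaim (N + j) (Nat.le_add_right N j)
  choose η hη1 hη2 hη3 using hdata
  obtain ⟨ηbar, hηbarcl, ψ₂, hψ₂, hηconv⟩ :=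
    hclcomp.tendsto_subseq (fun j => subset_closure (hη1 j))
  have hmm2 : Tendsto (fun j => m (φ₁ (N + ψ₂ j))) atTop (nhds 0) := by
    have h1 : Tendsto (fun j => N + ψ₂ j) atTop atTop :=
      tendsto_atTop_mono (fun j => Nat.le_add_left (ψ₂ j) N) hψ₂.tendsto_atTop
    exact hmlim.comp (hφ₁.tendsto_atTop.comp h1)
  have hξconv : Tendsto (fun j => hmul (m (φ₁ (N + ψ₂ j))) (η (ψ₂ j))) atTop (nhds ηbar) := by
    have h1 := hmm2.prodMk_nhds hηconv
    have h2 := (cont_hmul.tendsto ((0 : Heis), ηbar)).comp h1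
    simp only [Function.comp_def] at h2
    rw [hmul_zero_left] at h2
    exact h2
  have hfr : ηbar ∈ frontier Ω := by
    rw [frontier_eq_closure_inter_closure]
    exact ⟨hηbarcl,
      mem_closure_of_tendsto hξconv (Filter.Eventually.of_forall fun j => hη3 (ψ₂ j))⟩
  have hvK : v ηbar = K := (hbdry ηbar hfr).2
  have hlsc := hvlsc ηbar hηbarcl (K - θ) (by show _ < v ηbar; rw [hvK]; linarith)
  have hconv2 : Tendsto (fun j => η (ψ₂ j)) atTop (nhds ηbar ⊓ Filter.principal (closure Ω)) :=
    Filter.tendsto_inf.2 ⟨hηconv, Filter.tendsto_principal.2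
      (Filter.Eventually.of_forall fun j => subset_closure (hη1 (ψ₂ j)))⟩
  have hev : ∀ᶠ j in atTop, K - θ < v (η (ψ₂ j)) := hconv2 hlsc
  obtain ⟨j, hj⟩ := hev.exists
  linarith [hη2 (ψ₂ j)]
end
end

section
/- Let Ω be a domain in ℍ and f ∈ USC(Ω) be locally bounded. Let 𝒜 be a family of viscosity subsolutions of u + H(p,u,∇_H u) = f in Ω and define v(p) = sup{u(p) : u ∈ 𝒜} for p ∈ Ω. If v is locally bounded, then its upper semicontinuous envelope v* is a viscosity subsolution of u + H(p,u,∇_H u) = f in Ω. -/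
noncomputable section

-- usc attains max on compact
lemma usc_exists_max {K : Set Heis} (hK : IsCompact K) (hne : K.Nonempty)
    {f : Heis → ℝ} (hf : UpperSemicontinuousOn f K) :
    ∃ x ∈ K, ∀ y ∈ K, f y ≤ f x := by
  by_contra hcon
  push_neg at hcon
  -- for each x ∈ K pick y with f x < f y
  choose Y hY hfY using hcon
  -- for each x ∈ K, usc gives a neighborhood
  have hnb : ∀ x (hx : x ∈ K), ∃ U : Set Heis, IsOpen U ∧ x ∈ U ∧
      ∀ z ∈ U ∩ K, f z < f (Y x hx) := by
    intro x hx
    have := hf x hx (f (Y x hx)) (hfY x hx)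
    rw [eventually_nhdsWithin_iff] at this
    rcases (mem_nhds_iff.mp this) with ⟨U, hUsub, hUo, hxU⟩
    exact ⟨U, hUo, hxU, fun z hz => hUsub hz.1 hz.2⟩
  choose U hUo hxU hUlt using hnb
  obtain ⟨t, ht⟩ := hK.elim_nhds_subcover' U (fun x hx => (hUo x hx).mem_nhds (hxU x hx))
  have htne : t.Nonempty := by
    rcases hne with ⟨x, hx⟩
    rcases Set.mem_iUnion₂.mp (ht hx) with ⟨i, hi, _⟩
    exact ⟨i, hi⟩
  obtain ⟨b, hbt, hb⟩ := t.exists_max_image (fun x => f (Y x.1 x.2)) htne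
  -- Y b ∈ K, so it lies in some U i
  have hYbK : Y b.1 b.2 ∈ K := hY b.1 b.2
  rcases Set.mem_iUnion₂.mp (ht hYbK) with ⟨i, hit, hiU⟩
  have h1 : f (Y b.1 b.2) < f (Y i.1 i.2) := hUlt i.1 i.2 _ ⟨hiU, hYbK⟩
  have h2 : f (Y i.1 i.2) ≤ f (Y b.1 b.2) := hb i hit
  linarith
lemma hmul_hinv_cancel (p h : Heis) : hmul (hinv p) (hmul p h) = h := by
  obtain ⟨h1, h2, h3⟩ := h
  simp only [hmul, hinv, Prod.mk.injEq]
  refine ⟨by ring, by ring, by ring⟩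

lemma hmul_fst (p q : Heis) : (hmul p q).1 = p.1 + q.1 := rfl
lemma hmul_snd_fst (p q : Heis) : (hmul p q).2.1 = p.2.1 + q.2.1 := rfl

lemma mem_hplane_hmul (q h : Heis) (hh : h.2.2 = 0) : hmul q h ∈ hplane q := ⟨h, hh, rfl⟩

lemma hmul_as_add (q : Heis) (a b t : ℝ) :
    hmul q (t * a, t * b, 0) = q + t • ((a, b, (q.1 * b - a * q.2.1) / 2) : Heis) := by
  obtain ⟨q1, q2, q3⟩ := q
  simp only [hmul, Prod.mk.injEq, Prod.smul_def, Prod.fst_add, Prod.snd_add, smul_eq_mul,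
    Prod.mk_add_mk]
  refine ⟨trivial, trivial, by ring⟩

-- the penalization function
def gp (p : Heis) : Heis → ℝ := fun q =>
  ((q.1 - p.1) ^ 2 + (q.2.1 - p.2.1) ^ 2 + (q.2.2 - p.2.2) ^ 2) ^ 2

lemma gp_self (p : Heis) : gp p p = 0 := by simp [gp]

lemma gp_nonneg (p q : Heis) : 0 ≤ gp p q := sq_nonneg _

lemma gp_contDiff (p : Heis) : ContDiff ℝ 1 (gp p) := by
  unfold gp
  fun_prop

lemma gp_continuous (p : Heis) : Continuous (gp p) := (gp_contDiff p).continuous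

lemma dist_pow_le_gp (p q : Heis) : dist q p ^ 4 ≤ gp p q := by
  have h1 : dist q p ^ 2 ≤ (q.1 - p.1) ^ 2 + (q.2.1 - p.2.1) ^ 2 + (q.2.2 - p.2.2) ^ 2 := by
    rcases Prod.dist_eq (x := q) (y := p) with hd
    rw [hd]
    rcases max_cases (dist q.1 p.1) (dist q.2 p.2) with ⟨h, _⟩ | ⟨h, _⟩
    · rw [h]
      have : dist q.1 p.1 ^ 2 = (q.1 - p.1) ^ 2 := by
        rw [Real.dist_eq, sq_abs]
      nlinarith [sq_nonneg (q.2.1 - p.2.1), sq_nonneg (q.2.2 - p.2.2)]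
    · rw [h]
      rcases Prod.dist_eq (x := q.2) (y := p.2) with hd2
      rw [hd2]
      rcases max_cases (dist q.2.1 p.2.1) (dist q.2.2 p.2.2) with ⟨h2, _⟩ | ⟨h2, _⟩
      · rw [h2, Real.dist_eq, sq_abs]
        nlinarith [sq_nonneg (q.1 - p.1), sq_nonneg (q.2.2 - p.2.2)]
      · rw [h2, Real.dist_eq, sq_abs]
        nlinarith [sq_nonneg (q.1 - p.1), sq_nonneg (q.2.1 - p.2.1)]
  calc dist q p ^ 4 = (dist q p ^ 2) ^ 2 := by ring
  _ ≤ ((q.1 - p.1) ^ 2 + (q.2.1 - p.2.1) ^ 2 + (q.2.2 - p.2.2) ^ 2) ^ 2 := by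
      apply pow_le_pow_left₀ (sq_nonneg _) h1
  _ = gp p q := rfl

lemma fderiv_gp_self (p : Heis) : fderiv ℝ (gp p) p = 0 := by
  set s : Heis → ℝ := fun q => (q.1 - p.1) ^ 2 + (q.2.1 - p.2.1) ^ 2 + (q.2.2 - p.2.2) ^ 2 with hsdef
  have hs : DifferentiableAt ℝ s p := by simp only [hsdef]; fun_prop
  have hsp : s p = 0 := by simp [hsdef]
  have hgs : gp p = fun q => s q * s q := by funext q; simp only [gp, hsdef]; ring
  rw [hgs, fderiv_fun_mul hs hs, hsp]
  simp
lemma hGrad_continuous {ψ : Heis → ℝ} (hψ : ContDiff ℝ 1 ψ) : Continuous (hGrad ψ) := by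
  have hfd : Continuous (fderiv ℝ ψ) := hψ.continuous_fderiv one_ne_zero
  unfold hGrad
  apply Continuous.prodMk
  · exact hfd.clm_apply (by fun_prop)
  · exact hfd.clm_apply (by fun_prop)

lemma hpair_hmul {ψ : Heis → ℝ} (q h : Heis) :
    hpair ψ q (hmul q h) = (hGrad ψ q).1 * h.1 + (hGrad ψ q).2 * h.2.1 := by
  simp [hpair, hmul_hinv_cancel]

lemma hGrad_add_gp {φ : Heis → ℝ} (hφ : ContDiff ℝ 1 φ) (p : Heis) :
    hGrad (fun q => φ q + gp p q) p = hGrad φ p := by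
  have h1 : fderiv ℝ (fun q => φ q + gp p q) p = fderiv ℝ φ p := by
    rw [fderiv_fun_add (hφ.differentiable one_ne_zero p) ((gp_contDiff p).differentiable one_ne_zero p),
      fderiv_gp_self]
    simp
  simp [hGrad, h1]

-- usc of min-modification
open Classical in
lemma usc_min_mod {Ω U : Set Heis} (hU : IsOpen U) {w : Heis → ℝ}
    (hw : UpperSemicontinuousOn w Ω) (c : ℝ) :
    UpperSemicontinuousOn (fun q => if q ∈ U then min (w q) c else w q) Ω := by
  intro x hx y hy
  simp only at hy ⊢
  by_cases hxy : w x < y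
  · filter_upwards [hw x hx y hxy] with q hq
    split_ifs
    · exact lt_of_le_of_lt (min_le_left _ _) hq
    · exact hq
  · push_neg at hxy
    have hxU : x ∈ U := by
      by_contra hxU
      rw [if_neg hxU] at hy
      exact absurd hy (not_lt.mpr hxy)
    have hcy : c < y := by
      rw [if_pos hxU] at hy
      rcases min_cases (w x) c with ⟨h, _⟩ | ⟨h, _⟩
      · rw [h] at hy; linarith
      · rw [h] at hy; exact hy
    have hev : ∀ᶠ q in nhdsWithin x Ω, q ∈ U :=
      eventually_nhdsWithin_of_eventually_nhds (hU.eventually_mem hxU)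
    filter_upwards [hev] with q hq
    rw [if_pos hq]
    exact lt_of_le_of_lt (min_le_right _ _) hcy

-- difference of usc and continuous is usc
lemma usc_sub_cont {Ω : Set Heis} {u ψ : Heis → ℝ} (hu : UpperSemicontinuousOn u Ω)
    (hψ : Continuous ψ) : UpperSemicontinuousOn (fun q => u q - ψ q) Ω := by
  intro x hx y hy
  simp only at hy ⊢
  set ε := (y - (u x - ψ x)) / 2 with hε
  have hεpos : 0 < ε := by simp only [hε]; linarith
  have h1 : ∀ᶠ q in nhdsWithin x Ω, u q < u x + ε := hu x hx (u x + ε) (by linarith)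
  have h2 : ∀ᶠ q in nhdsWithin x Ω, ψ x - ε < ψ q := by
    apply eventually_nhdsWithin_of_eventually_nhds
    have := hψ.continuousAt (x := x)
    rcases Metric.continuousAt_iff.mp this ε hεpos with ⟨δ, hδ, hd⟩
    filter_upwards [Metric.ball_mem_nhds x hδ] with q hq
    have := hd hq
    rw [Real.dist_eq] at this
    have := abs_lt.mp this
    linarith
  filter_upwards [h1, h2] with q hq1 hq2
  simp only [hε] at hq1 hq2 ⊢
  linarith
open Classical in
lemma vstar_le_of_bound {Ω U : Set Heis} {v vstar : Heis → ℝ}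
    (hvstar : IsUscEnvOn Ω v vstar) (hU : IsOpen U) {c : ℝ}
    (hb : ∀ q ∈ U ∩ Ω, v q ≤ c) : ∀ p ∈ U ∩ Ω, vstar p ≤ c := by
  intro p hp
  set z : Heis → ℝ := fun q => if q ∈ U then min (vstar q) c else vstar q with hz
  have hzusc : UpperSemicontinuousOn z Ω := usc_min_mod hU hvstar.1 c
  have hvz : ∀ q ∈ Ω, v q ≤ z q := by
    intro q hq
    simp only [hz]
    split_ifs with h
    · exact le_min (hvstar.2.1 q hq) (hb q ⟨h, hq⟩)
    · exact hvstar.2.1 q hq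
  have := hvstar.2.2 z hzusc hvz p hp.2
  simp only [hz, if_pos hp.1] at this
  exact le_trans this (min_le_right _ _)

lemma vstar_approx {Ω : Set Heis} {v vstar : Heis → ℝ}
    (hvstar : IsUscEnvOn Ω v vstar) {p : Heis} (hp : p ∈ Ω) {ε δ : ℝ}
    (hε : 0 < ε) (hδ : 0 < δ) : ∃ q ∈ Ω, dist q p < δ ∧ vstar p - ε < v q := by
  by_contra hcon
  push_neg at hcon
  have hb : ∀ q ∈ Metric.ball p δ ∩ Ω, v q ≤ vstar p - ε := by
    intro q hq
    exact hcon q hq.2 (by simpa [Metric.mem_ball] using hq.1)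
  have := vstar_le_of_bound hvstar Metric.isOpen_ball hb p
    ⟨Metric.mem_ball_self hδ, hp⟩
  linarith

lemma vstar_locbdd {Ω : Set Heis} {v vstar : Heis → ℝ}
    (hvstar : IsUscEnvOn Ω v vstar) (hvlb : LocBddOn Ω v) : LocBddOn Ω vstar := by
  intro p hp
  obtain ⟨s, hs, C, hC⟩ := hvlb p hp
  refine ⟨interior s, interior_mem_nhds.mpr hs, C, ?_⟩
  intro q hq
  have hub : vstar q ≤ C := by
    apply vstar_le_of_bound hvstar isOpen_interior (c := C) ?_ q hq
    intro x hx
    exact le_trans (le_abs_self _) (hC x ⟨interior_subset hx.1, hx.2⟩)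
  have hlb : -C ≤ vstar q := by
    have h1 : -C ≤ v q := by
      have := hC q ⟨interior_subset hq.1, hq.2⟩
      have := abs_le.mp this
      linarith [this.1]
    exact le_trans h1 (hvstar.2.1 q hq.2)
  rw [abs_le]
  exact ⟨hlb, hub⟩
lemma key_construction {Ω : Set Heis} (hΩo : IsOpen Ω)
    {f : Heis → ℝ} {A : Set (Heis → ℝ)} (hA : A.Nonempty)
    (hAsub : ∀ u ∈ A, IsSubSoln Ω f u)
    {v : Heis → ℝ} (hv : ∀ p : Heis, v p = sSup {y : ℝ | ∃ u ∈ A, y = u p})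
    (hvb : ∀ p ∈ Ω, BddAbove {y : ℝ | ∃ u ∈ A, y = u p})
    {vstar : Heis → ℝ} (hvstar : IsUscEnvOn Ω v vstar)
    {p : Heis} (hp : p ∈ Ω) {φ : Heis → ℝ} (hφ : ContDiff ℝ 1 φ)
    (hmax : IsMaxOn (fun q => vstar q - φ q) Ω p)
    {ε₀ δstar : ℝ} (hε₀ : 0 < ε₀) (hδstar : 0 < δstar) :
    ∃ u ∈ A, ∃ qh ∈ Ω, dist qh p < δstar ∧ vstar p - ε₀ ≤ u qh ∧
      IsMaxOn (fun q => u q - (φ q + gp p q)) Ω qh := by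
  set ψ : Heis → ℝ := fun q => φ q + gp p q with hψdef
  have hψcont : Continuous ψ := (hφ.continuous).add (gp_continuous p)
  have hψp : ψ p = φ p := by simp [hψdef, gp_self]
  clear_value ψ
  -- radius with closed ball inside Ω
  obtain ⟨r', hr', hball⟩ := Metric.isOpen_iff.mp hΩo p hp
  set r := r' / 2 with hrdef
  have hr : 0 < r := by positivity
  have hKsub : Metric.closedBall p r ⊆ Ω :=
    (Metric.closedBall_subset_ball (by simp only [hrdef]; linarith)).trans hball
  clear_value r
  -- continuity of ψ at p with ε₀/4
  obtain ⟨ρ₁, hρ₁, hψρ₁⟩ := Metric.continuousAt_iff.mp (hψcont.continuousAt (x := p))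
    (ε₀ / 4) (by positivity)
  set δ₀ := min (min δstar r) ρ₁ with hδ₀def
  have hδ₀ : 0 < δ₀ := by
    simp only [hδ₀def, lt_min_iff]
    exact ⟨⟨hδstar, hr⟩, hρ₁⟩
  clear_value δ₀
  set η := min ((δ₀ / 2) ^ 4) (ε₀ / 4) with hηdef
  have hη : 0 < η := by
    simp only [hηdef, lt_min_iff]
    constructor <;> positivity
  clear_value η
  -- continuity of ψ at p with η/4
  obtain ⟨ρ₂, hρ₂, hψρ₂⟩ := Metric.continuousAt_iff.mp (hψcont.continuousAt (x := p))
    (η / 4) (by positivity)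
  -- pick p' near p with v p' > vstar p - η/4
  obtain ⟨p', hp'Ω, hp'dist, hp'v⟩ := vstar_approx hvstar hp (ε := η / 4)
    (δ := min ρ₂ r) (by positivity) (by positivity)
  -- pick u ∈ A with u p' > v p' - η/4
  have hSne : {y : ℝ | ∃ u ∈ A, y = u p'}.Nonempty := by
    obtain ⟨u₀, hu₀⟩ := hA
    exact ⟨u₀ p', u₀, hu₀, rfl⟩
  have hlt : v p' - η / 4 < sSup {y : ℝ | ∃ u ∈ A, y = u p'} := by
    rw [← hv p']; linarith
  obtain ⟨y, ⟨u, huA, hy⟩, hylt⟩ := exists_lt_of_lt_csSup hSne hlt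
  have hup' : v p' - η / 4 < u p' := hy ▸ hylt
  have husub := hAsub u huA
  -- u ≤ vstar on Ω
  have hu_le : ∀ q ∈ Ω, u q ≤ vstar q := by
    intro q hq
    have h1 : u q ≤ v q := by
      rw [hv q]
      exact le_csSup (hvb q hq) ⟨u, huA, rfl⟩
    exact h1.trans (hvstar.2.1 q hq)
  set L := vstar p - φ p with hLdef
  clear_value L
  -- upper bound on u - ψ over Ω
  have hub : ∀ q ∈ Ω, u q - ψ q ≤ L - gp p q := by
    intro q hq
    have h1 : vstar q - φ q ≤ vstar p - φ p := hmax hq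
    have h2 : u q ≤ vstar q := hu_le q hq
    simp only [hψdef, hLdef]
    linarith
  -- max of u - ψ on the compact closed ball
  have hK : IsCompact (Metric.closedBall p r) := isCompact_closedBall p r
  have hKne : (Metric.closedBall p r).Nonempty := ⟨p, Metric.mem_closedBall_self hr.le⟩
  have huψusc : UpperSemicontinuousOn (fun q => u q - ψ q) (Metric.closedBall p r) :=
    usc_sub_cont (husub.1.mono hKsub) hψcont
  obtain ⟨qh, hqhK, hqhmax⟩ := usc_exists_max hK hKne huψusc
  have hqhΩ : qh ∈ Ω := hKsub hqhK
  -- p' ∈ K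
  have hp'K : p' ∈ Metric.closedBall p r :=
    Metric.mem_closedBall.mpr (le_of_lt (lt_of_lt_of_le hp'dist (min_le_right _ _)))
  -- lower bound at p'
  have hψp' : |ψ p' - ψ p| < η / 4 := by
    have := hψρ₂ (lt_of_lt_of_le hp'dist (min_le_left _ _))
    rwa [Real.dist_eq] at this
  have ha : L - 3 * η / 4 < u p' - ψ p' := by
    have h1 := (abs_lt.mp hψp').2
    simp only [hLdef]
    rw [← hψp]
    linarith
  have hqhval : L - 3 * η / 4 < u qh - ψ qh :=
    lt_of_lt_of_le ha (hqhmax p' hp'K)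
  -- gp small at qh
  have hgpqh : gp p qh < 3 * η / 4 := by
    have h2 := hub qh hqhΩ
    by_contra hcon
    push_neg at hcon
    have h3 : L - 3 * η / 4 < L - gp p qh := lt_of_lt_of_le hqhval h2
    linarith
  -- distance bound
  have hdistqh : dist qh p < δ₀ := by
    have h1 : dist qh p ^ 4 < (δ₀ / 2) ^ 4 := by
      calc dist qh p ^ 4 ≤ gp p qh := dist_pow_le_gp p qh
      _ < 3 * η / 4 := hgpqh
      _ < η := by linarith
      _ ≤ (δ₀ / 2) ^ 4 := by simp only [hηdef]; exact min_le_left _ _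
    have h2 : dist qh p < δ₀ / 2 := lt_of_pow_lt_pow_left₀ 4 (by positivity) h1
    linarith
  -- global max on Ω
  have hgmax : IsMaxOn (fun q => u q - ψ q) Ω qh := by
    rw [isMaxOn_iff]
    intro q hq
    by_cases hqK : q ∈ Metric.closedBall p r
    · exact hqhmax q hqK
    · have hdq : r < dist q p := by
        simp only [Metric.mem_closedBall, not_le] at hqK
        exact hqK
      have hgq : η ≤ gp p q := by
        calc η ≤ (δ₀ / 2) ^ 4 := by simp only [hηdef]; exact min_le_left _ _
        _ ≤ r ^ 4 := by
            apply pow_le_pow_left₀ (by positivity)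
            have : δ₀ ≤ r := by rw [hδ₀def]; exact le_trans (min_le_left _ _) (min_le_right _ _)
            linarith
        _ ≤ dist q p ^ 4 := pow_le_pow_left₀ hr.le hdq.le 4
        _ ≤ gp p q := dist_pow_le_gp p q
      show u q - ψ q ≤ u qh - ψ qh
      have h4 : u q - ψ q ≤ L - 3 * η / 4 := by
        have h5 := hub q hq
        linarith
      exact le_trans h4 (le_of_lt hqhval)
  -- lower bound on u qh
  have hψqh : |ψ qh - ψ p| < ε₀ / 4 := by
    have hd : δ₀ ≤ ρ₁ := by rw [hδ₀def]; exact min_le_right _ _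
    have := hψρ₁ (lt_of_lt_of_le hdistqh hd)
    rwa [Real.dist_eq] at this
  have hulow : vstar p - ε₀ ≤ u qh := by
    have h1 := (abs_lt.mp hψqh).1
    have h2 : η ≤ ε₀ / 4 := by simp only [hηdef]; exact min_le_right _ _
    have h3 : L - 3 * η / 4 < u qh - ψ qh := hqhval
    simp only [hLdef] at h3
    rw [← hψp] at h3
    linarith
  simp only [hψdef] at hgmax
  have hd2 : δ₀ ≤ δstar := by rw [hδ₀def]; exact le_trans (min_le_left _ _) (min_le_left _ _)
  exact ⟨u, huA, qh, hqhΩ, lt_of_lt_of_le hdistqh hd2, hulow, hgmax⟩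
lemma hGrad_eq_zero_of_hplane_min {ψ : Heis → ℝ} (hψ : ContDiff ℝ 1 ψ) {q : Heis}
    {r : ℝ} (hr : 0 < r)
    (hloc : ∀ ξ ∈ hplane q, ξ ∈ Metric.ball q r → ψ q ≤ ψ ξ) :
    hGrad ψ q = 0 := by
  have key : ∀ a b : ℝ, fderiv ℝ ψ q ((a, b, (q.1 * b - a * q.2.1) / 2) : Heis) = 0 := by
    intro a b
    set w : Heis := (a, b, (q.1 * b - a * q.2.1) / 2) with hw
    set c : ℝ → Heis := fun t => q + t • w with hc
    have hc0 : c 0 = q := by simp [hc]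
    have hccont : Continuous c := by fun_prop
    have hmem : ∀ t : ℝ, c t ∈ hplane q := by
      intro t
      have : c t = hmul q (t * a, t * b, 0) := by
        rw [hmul_as_add]
      rw [this]
      exact mem_hplane_hmul q _ rfl
    -- local min of ψ ∘ c at 0
    have hlm : IsLocalMin (fun t => ψ (c t)) 0 := by
      have hball : ∀ᶠ t in nhds (0 : ℝ), c t ∈ Metric.ball q r := by
        have : Metric.ball q r ∈ nhds (c 0) := by
          rw [hc0]
          exact Metric.ball_mem_nhds q hr
        exact hccont.continuousAt.eventually_mem this
      filter_upwards [hball] with t ht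
      have := hloc (c t) (hmem t) ht
      simpa [hc0] using this
    -- derivative of ψ ∘ c at 0
    have hcd : HasDerivAt c w 0 := by
      have h1 : HasDerivAt (fun t : ℝ => t • w) ((1 : ℝ) • w) 0 :=
        (hasDerivAt_id (0 : ℝ)).smul_const w
      rw [one_smul] at h1
      exact h1.const_add q
    have hψd : HasFDerivAt ψ (fderiv ℝ ψ q) q := (hψ.differentiable one_ne_zero q).hasFDerivAt
    have hψd' : HasFDerivAt ψ (fderiv ℝ ψ q) (c 0) := by rw [hc0]; exact hψd
    have hcomp : HasDerivAt (fun t => ψ (c t)) (fderiv ℝ ψ q w) 0 :=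
      hψd'.comp_hasDerivAt 0 hcd
    have := hlm.deriv_eq_zero
    rw [hcomp.deriv] at this
    exact this
  have e1 : ((1, 0, -q.2.1 / 2) : Heis) = ((1, 0, (q.1 * 0 - 1 * q.2.1) / 2) : Heis) := by
    norm_num
  have e2 : ((0, 1, q.1 / 2) : Heis) = ((0, 1, (q.1 * 1 - 0 * q.2.1) / 2) : Heis) := by
    norm_num
  unfold hGrad
  rw [e1, e2, key 1 0, key 0 1]
  rfl
lemma usc_ball {Ω : Set Heis} {w : Heis → ℝ} (husc : UpperSemicontinuousOn w Ω)
    {x : Heis} (hx : x ∈ Ω) {c : ℝ} (hc : w x < c) :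
    ∃ δ > 0, ∀ q ∈ Ω, dist q x < δ → w q < c := by
  have h := husc x hx c hc
  rw [eventually_nhdsWithin_iff] at h
  rcases Metric.mem_nhds_iff.mp h with ⟨δ, hδ, hsub⟩
  exact ⟨δ, hδ, fun q hq hd => hsub (by simpa [Metric.mem_ball] using hd) hq⟩

lemma continuous_hmul_left (h : Heis) : Continuous (fun q : Heis => hmul q h) := by
  unfold hmul
  fun_prop

lemma u_le_vstar {Ω : Set Heis} {A : Set (Heis → ℝ)} {v vstar : Heis → ℝ}
    (hv : ∀ p : Heis, v p = sSup {y : ℝ | ∃ u ∈ A, y = u p})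
    (hvb : ∀ p ∈ Ω, BddAbove {y : ℝ | ∃ u ∈ A, y = u p})
    (hvstar : IsUscEnvOn Ω v vstar) {u : Heis → ℝ} (huA : u ∈ A) :
    ∀ q ∈ Ω, u q ≤ vstar q := by
  intro q hq
  have h1 : u q ≤ v q := by
    rw [hv q]
    exact le_csSup (hvb q hq) ⟨u, huA, rfl⟩
  exact h1.trans (hvstar.2.1 q hq)

lemma abs_fst_le_dist (q ξ : Heis) : |(hmul (hinv q) ξ).1| ≤ dist ξ q := by
  have h1 : (hmul (hinv q) ξ).1 = ξ.1 - q.1 := by simp [hmul, hinv]; ring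
  rw [h1, ← Real.dist_eq]
  rw [Prod.dist_eq]
  exact le_max_left _ _

lemma abs_snd_le_dist (q ξ : Heis) : |(hmul (hinv q) ξ).2.1| ≤ dist ξ q := by
  have h1 : (hmul (hinv q) ξ).2.1 = ξ.2.1 - q.2.1 := by simp [hmul, hinv]; ring
  rw [h1, ← Real.dist_eq]
  calc dist ξ.2.1 q.2.1 ≤ dist ξ.2 q.2 := by rw [Prod.dist_eq]; exact le_max_left _ _
  _ ≤ dist ξ q := by rw [Prod.dist_eq]; exact le_max_right _ _

/-- Proposition 3.9 (Maximal subsolution): the upper semicontinuous envelope of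
the pointwise supremum of a family of viscosity subsolutions is again a
viscosity subsolution. -/
theorem sup_of_subsolutions
    (Ω : Set Heis) (hΩo : IsOpen Ω) (hΩconn : IsConnected Ω)
    (f : Heis → ℝ) (hfusc : UpperSemicontinuousOn f Ω) (hfb : LocBddOn Ω f)
    (A : Set (Heis → ℝ)) (hA : A.Nonempty)
    (hAsub : ∀ u ∈ A, IsSubSoln Ω f u)
    (v : Heis → ℝ)
    (hv : ∀ p : Heis, v p = sSup {y : ℝ | ∃ u ∈ A, y = u p})
    (hvb : ∀ p ∈ Ω, BddAbove {y : ℝ | ∃ u ∈ A, y = u p})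
    (hvlb : LocBddOn Ω v)
    (vstar : Heis → ℝ) (hvstar : IsUscEnvOn Ω v vstar) :
    IsSubSoln Ω f vstar := by
  refine ⟨hvstar.1, vstar_locbdd hvstar hvlb, ?_⟩
  intro p hp φ hφ hmax
  have hΨC1 : ContDiff ℝ 1 (fun q => φ q + gp p q) := hφ.add (gp_contDiff p)
  have hGradΨp : hGrad (fun q => φ q + gp p q) p = hGrad φ p := hGrad_add_gp hφ p
  have hGcont : Continuous (hGrad (fun q => φ q + gp p q)) := hGrad_continuous hΨC1
  constructor
  · -- clause (a)
    intro ξ hξpl hξΩ hlt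
    obtain ⟨h, hh0, hξeq⟩ := hξpl
    have hinvξ : hmul (hinv p) ξ = h := by rw [hξeq]; exact hmul_hinv_cancel p h
    set F : Heis → ℝ := fun q => (hGrad (fun q' => φ q' + gp p q') q).1 * h.1 +
      (hGrad (fun q' => φ q' + gp p q') q).2 * h.2.1 with hF
    have hFcont : Continuous F :=
      ((hGcont.fst).mul continuous_const).add ((hGcont.snd).mul continuous_const)
    have hFp : F p = hpair φ p ξ := by
      simp only [hF, hGradΨp, hpair, hinvξ]
    have claim : ∀ ε > 0, vstar p + hpair φ p ξ ≤ f p + 3 * ε := by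
      intro ε hε
      set σ := (vstar p - vstar ξ) / 2 with hσ
      have hσpos : 0 < σ := by simp only [hσ]; linarith
      obtain ⟨δ₁, hδ₁, hδ₁prop⟩ := usc_ball hvstar.1 hξΩ (c := vstar ξ + σ) (by linarith)
      obtain ⟨δ₃, hδ₃, hδ₃prop⟩ := usc_ball hfusc hp (c := f p + ε) (by linarith)
      obtain ⟨δΩ, hδΩ, hballΩ⟩ := Metric.isOpen_iff.mp hΩo ξ hξΩ
      have hmc : ContinuousAt (fun q : Heis => hmul q h) p :=
        (continuous_hmul_left h).continuousAt
      obtain ⟨δm, hδm, hδmprop⟩ := Metric.continuousAt_iff.mp hmc (min δ₁ δΩ)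
        (lt_min hδ₁ hδΩ)
      obtain ⟨δF, hδF, hδFprop⟩ := Metric.continuousAt_iff.mp hFcont.continuousAt ε hε
      obtain ⟨u, huA, qh, hqhΩ, hqhdist, hqhlow, hgmax⟩ :=
        key_construction hΩo hA hAsub hv hvb hvstar hp hφ hmax
          (ε₀ := min σ ε) (δstar := min (min δ₃ δm) δF)
          (lt_min hσpos hε) (lt_min (lt_min hδ₃ hδm) hδF)
      set ξh := hmul qh h with hξhdef
      have hqhδm : dist qh p < δm :=
        lt_of_lt_of_le hqhdist (le_trans (min_le_left _ _) (min_le_right _ _))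
      have hξhdist : dist ξh ξ < min δ₁ δΩ := by
        have h5 := hδmprop hqhδm
        rwa [← hξeq] at h5
      have hξhΩ : ξh ∈ Ω := hballΩ (by
        rw [Metric.mem_ball]
        exact lt_of_lt_of_le hξhdist (min_le_right _ _))
      have hξhvstar : vstar ξh < vstar ξ + σ :=
        hδ₁prop ξh hξhΩ (lt_of_lt_of_le hξhdist (min_le_left _ _))
      have hult : u ξh < u qh := by
        have h6 : u ξh ≤ vstar ξh := u_le_vstar hv hvb hvstar huA ξh hξhΩ
        have h7 : vstar ξ + σ = vstar p - σ := by simp only [hσ]; ring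
        have h8 : vstar p - min σ ε ≤ u qh := hqhlow
        have h9 : min σ ε ≤ σ := min_le_left _ _
        linarith
      have husub := hAsub u huA
      have hc1 := (husub.2.2 qh hqhΩ (fun q => φ q + gp p q) hΨC1 hgmax).1 ξh
        (mem_hplane_hmul qh h hh0) hξhΩ hult
      have hpair_eq : hpair (fun q => φ q + gp p q) qh ξh = F qh := by
        rw [hξhdef, hpair_hmul]
      have hFqh : |F qh - F p| < ε := by
        have h10 := hδFprop (lt_of_lt_of_le hqhdist (min_le_right _ _))
        rwa [Real.dist_eq] at h10
      have hfqh : f qh < f p + ε := hδ₃prop qh hqhΩ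
        (lt_of_lt_of_le hqhdist (le_trans (min_le_left _ _) (min_le_left _ _)))
      have hlow2 : vstar p - ε ≤ u qh :=
        le_trans (by have : min σ ε ≤ ε := min_le_right _ _; linarith) hqhlow
      rw [hpair_eq] at hc1
      have h11 := (abs_lt.mp hFqh).1
      rw [hFp] at h11
      linarith
    by_contra hcon
    push_neg at hcon
    have h3 := claim ((vstar p + hpair φ p ξ - f p) / 4) (by linarith)
    linarith
  · -- clause (b)
    intro hgrad0
    obtain ⟨r', hr', hballΩ'⟩ := Metric.isOpen_iff.mp hΩo p hp
    set r₀ := r' / 4 with hr₀def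
    have hr₀pos : 0 < r₀ := by simp only [hr₀def]; positivity
    have claim : ∀ ε > 0, vstar p ≤ f p + ε * (2 + 2 * r₀) := by
      intro ε hε
      obtain ⟨δ₃, hδ₃, hδ₃prop⟩ := usc_ball hfusc hp (c := f p + ε) (by linarith)
      have hG0 : hGrad (fun q => φ q + gp p q) p = 0 := by rw [hGradΨp, hgrad0]
      obtain ⟨δG, hδG, hδGprop⟩ := Metric.continuousAt_iff.mp hGcont.continuousAt ε hε
      obtain ⟨u, huA, qh, hqhΩ, hqhdist, hqhlow, hgmax⟩ :=
        key_construction hΩo hA hAsub hv hvb hvstar hp hφ hmax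
          (ε₀ := ε) (δstar := min (min δ₃ δG) r₀)
          hε (lt_min (lt_min hδ₃ hδG) hr₀pos)
      have hqhr₀ : dist qh p < r₀ :=
        lt_of_lt_of_le hqhdist (min_le_right _ _)
      have hballsub : Metric.ball qh r₀ ⊆ Ω := by
        intro x hx
        apply hballΩ'
        rw [Metric.mem_ball] at hx ⊢
        calc dist x p ≤ dist x qh + dist qh p := dist_triangle _ _ _
        _ < r₀ + r₀ := by exact add_lt_add hx hqhr₀
        _ ≤ r' := by simp only [hr₀def]; linarith
      -- gradient small at qh
      have hGsmall : dist (hGrad (fun q => φ q + gp p q) qh) 0 < ε := by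
        have h1 := hδGprop (lt_of_lt_of_le hqhdist
          (le_trans (min_le_left _ _) (min_le_right _ _)))
        rwa [hG0] at h1
      have hG1 : |(hGrad (fun q => φ q + gp p q) qh).1| ≤ ε := by
        have := le_max_left (dist (hGrad (fun q => φ q + gp p q) qh).1 (0:ℝ×ℝ).1)
          (dist (hGrad (fun q => φ q + gp p q) qh).2 (0:ℝ×ℝ).2)
        rw [← Prod.dist_eq] at this
        have h2 := lt_of_le_of_lt this hGsmall
        rw [Real.dist_eq] at h2
        simp only [Prod.fst_zero, sub_zero] at h2
        exact h2.le
      have hG2 : |(hGrad (fun q => φ q + gp p q) qh).2| ≤ ε := by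
        have := le_max_right (dist (hGrad (fun q => φ q + gp p q) qh).1 (0:ℝ×ℝ).1)
          (dist (hGrad (fun q => φ q + gp p q) qh).2 (0:ℝ×ℝ).2)
        rw [← Prod.dist_eq] at this
        have h2 := lt_of_le_of_lt this hGsmall
        rw [Real.dist_eq] at h2
        simp only [Prod.snd_zero, sub_zero] at h2
        exact h2.le
      have husub := hAsub u huA
      have hcl := husub.2.2 qh hqhΩ (fun q => φ q + gp p q) hΨC1 hgmax
      have hεr : (0:ℝ) ≤ ε * r₀ := le_of_lt (mul_pos hε hr₀pos)
      have hexp : ε * (2 + 2 * r₀) = 2 * ε + 2 * (ε * r₀) := by ring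
      by_cases hS : ∃ ξ, ξ ∈ hplane qh ∧ dist ξ qh < r₀ ∧ u ξ < u qh
      · obtain ⟨ξ, hξpl, hξd, hξu⟩ := hS
        have hξΩ : ξ ∈ Ω := hballsub (Metric.mem_ball.mpr hξd)
        have hc1 := hcl.1 ξ hξpl hξΩ hξu
        have hb1 : |(hGrad (fun q => φ q + gp p q) qh).1 * (hmul (hinv qh) ξ).1| ≤ ε * r₀ := by
          rw [abs_mul]
          apply mul_le_mul hG1 (le_of_lt (lt_of_le_of_lt (abs_fst_le_dist qh ξ) hξd))
            (abs_nonneg _) (le_of_lt hε)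
        have hb2 : |(hGrad (fun q => φ q + gp p q) qh).2 * (hmul (hinv qh) ξ).2.1| ≤ ε * r₀ := by
          rw [abs_mul]
          apply mul_le_mul hG2 (le_of_lt (lt_of_le_of_lt (abs_snd_le_dist qh ξ) hξd))
            (abs_nonneg _) (le_of_lt hε)
        have hpair_lb : -(ε * r₀) - ε * r₀ ≤ hpair (fun q => φ q + gp p q) qh ξ := by
          unfold hpair
          have h1 := neg_abs_le ((hGrad (fun q => φ q + gp p q) qh).1 * (hmul (hinv qh) ξ).1)
          have h2 := neg_abs_le ((hGrad (fun q => φ q + gp p q) qh).2 * (hmul (hinv qh) ξ).2.1)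
          linarith
        have hfqh : f qh < f p + ε := hδ₃prop qh hqhΩ
          (lt_of_lt_of_le hqhdist (le_trans (min_le_left _ _) (min_le_left _ _)))
        rw [hexp]
        linarith
      · push_neg at hS
        have hψmin : ∀ ξ ∈ hplane qh, ξ ∈ Metric.ball qh r₀ →
            (fun q => φ q + gp p q) qh ≤ (fun q => φ q + gp p q) ξ := by
          intro ξ hξpl hξb
          have hξΩ : ξ ∈ Ω := hballsub hξb
          have h6 : u ξ - (φ ξ + gp p ξ) ≤ u qh - (φ qh + gp p qh) := hgmax hξΩ
          have h7 : u qh ≤ u ξ := hS ξ hξpl (Metric.mem_ball.mp hξb)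
          simp only
          linarith
        have hG0qh : hGrad (fun q => φ q + gp p q) qh = 0 :=
          hGrad_eq_zero_of_hplane_min hΨC1 hr₀pos hψmin
        have hc2 := hcl.2 hG0qh
        have hfqh : f qh < f p + ε := hδ₃prop qh hqhΩ
          (lt_of_lt_of_le hqhdist (le_trans (min_le_left _ _) (min_le_left _ _)))
        rw [hexp]
        linarith
    by_contra hcon
    push_neg at hcon
    have hd : (0:ℝ) < 2 * (2 + 2 * r₀) := by positivity
    have h2 := claim ((vstar p - f p) / (2 * (2 + 2 * r₀))) (div_pos (by linarith) hd)
    have h3 : ((vstar p - f p) / (2 * (2 + 2 * r₀))) * (2 + 2 * r₀) = (vstar p - f p) / 2 := by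
      field_simp
    rw [h3] at h2
    linarith
end
end
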